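/- arXiv:0912.4269 — 9 statements merged into one kernel-verified Lean document; each statement's English description precedes it below -/
import Mathlib

section
/- Let (Ω, F, P) be a probability space and p : Ω → [0,1] a precise p-test, i.e. a measurable function with P{p ≤ δ} = δ for every δ ∈ [0,1]. Then there exist a filtration (F_t)_{t∈[0,∞)} and a test martingale (X_t, F_t)_{t∈[0,∞)} (a nonnegative martingale with E[X_0] = 1) such that sup_{t∈[0,∞)} X_t = 1/p almost surely. In fact, the process defined by X_t(ω) = 1 for t ∈ [0,1), X_t(ω) = t for t ∈ [1, 1/p(ω)), and X_t(ω) = 0 for t ≥ 1/p(ω) is such a test martingale with respect to its natural filtration. -/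
open MeasureTheory Filter Topology ENNReal NNReal

namespace PPAux

noncomputable def rr (t : ℝ≥0) : ℝ := if (t : ℝ) < 1 then 1 else (t : ℝ)⁻¹

lemma rr_pos (t : ℝ≥0) : 0 < rr t := by
  unfold rr; split_ifs with h
  · norm_num
  · have : (1:ℝ) ≤ t := not_lt.1 h
    positivity

lemma rr_le_one (t : ℝ≥0) : rr t ≤ 1 := by
  unfold rr; split_ifs with h
  · exact le_rfl
  · exact inv_le_one_of_one_le₀ (not_lt.1 h)

lemma rr_anti {s t : ℝ≥0} (hst : s ≤ t) : rr t ≤ rr s := by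
  unfold rr; split_ifs with h1 h2 h2
  · exact le_rfl
  · exact absurd (lt_of_le_of_lt (NNReal.coe_le_coe.2 hst) h1) h2
  · exact inv_le_one_of_one_le₀ (not_lt.1 h1)
  · have hs : (0:ℝ) < s := lt_of_lt_of_le one_pos (not_lt.1 h2)
    exact inv_anti₀ hs (NNReal.coe_le_coe.2 hst)

variable {Ω : Type*}

noncomputable def gg (p : Ω → ℝ) (t : ℝ≥0) (ω : Ω) : ℝ :=
  if p ω < rr t then -1 else p ω

noncomputable def XX (p : Ω → ℝ) (t : ℝ≥0) (ω : Ω) : ℝ :=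
  if (t : ℝ) < 1 then (1 : ℝ)
  else if (t : ℝ≥0∞) < (ENNReal.ofReal (p ω))⁻¹ then (t : ℝ) else 0

lemma cond_iff' {p : ℝ} (hp0 : 0 < p) (t : ℝ≥0) :
    ((t : ℝ≥0∞) < (ENNReal.ofReal p)⁻¹) ↔ (t : ℝ) < p⁻¹ := by
  rw [← ENNReal.ofReal_inv_of_pos hp0, ← ENNReal.ofReal_coe_nnreal,
      ENNReal.ofReal_lt_ofReal_iff (by positivity)]

lemma cond_iff {p : ℝ} (hp0 : 0 ≤ p) {t : ℝ≥0} (h : ¬((t : ℝ) < 1)) :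
    ((t : ℝ≥0∞) < (ENNReal.ofReal p)⁻¹) ↔ p < rr t := by
  have ht : (0:ℝ) < t := lt_of_lt_of_le one_pos (not_lt.1 h)
  rw [rr, if_neg h]
  rcases eq_or_lt_of_le hp0 with h0 | h0
  · rw [← h0]
    simp only [ENNReal.ofReal_zero, ENNReal.inv_zero]
    exact iff_of_true (ENNReal.coe_lt_top) (by positivity)
  · rw [cond_iff' h0]
    exact lt_inv_comm₀ ht h0

lemma XX_eq_one (p : Ω → ℝ) {t : ℝ≥0} (h : (t : ℝ) < 1) :
    XX p t = fun _ => (1:ℝ) := funext fun ω => if_pos h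

lemma XX_eq_indicator {p : Ω → ℝ} (h01 : ∀ ω, p ω ∈ Set.Icc (0:ℝ) 1) {t : ℝ≥0}
    (h : ¬((t : ℝ) < 1)) :
    XX p t = Set.indicator {ω | p ω < rr t} (fun _ => (t : ℝ)) := by
  funext ω
  rw [XX, if_neg h, Set.indicator_apply]
  by_cases hc : p ω < rr t
  · rw [if_pos ((cond_iff (h01 ω).1 h).2 hc),
      if_pos (show ω ∈ {ω | p ω < rr t} from hc)]
  · rw [if_neg (fun hh => hc ((cond_iff (h01 ω).1 h).1 hh)),
      if_neg (show ω ∉ {ω | p ω < rr t} from hc)]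

lemma gg_comp (p : Ω → ℝ) {s t : ℝ≥0} (hst : s ≤ t) :
    gg p s = (fun v : ℝ => if v < rr s then -1 else v) ∘ gg p t := by
  have hrr := rr_anti hst
  funext ω
  show (if p ω < rr s then (-1:ℝ) else p ω)
      = (fun v : ℝ => if v < rr s then -1 else v) (if p ω < rr t then (-1:ℝ) else p ω)
  by_cases h : p ω < rr t
  · rw [if_pos h, if_pos (lt_of_lt_of_le h hrr)]
    show (-1:ℝ) = if (-1:ℝ) < rr s then -1 else -1
    split_ifs <;> rfl
  · rw [if_neg h]
  
lemma gg_measurable {p : Ω → ℝ} {m : MeasurableSpace Ω} (hmeas : Measurable p) (t : ℝ≥0) :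
    Measurable (gg p t) :=
  Measurable.ite (measurableSet_lt hmeas measurable_const) measurable_const hmeas

lemma ff_mono {p : Ω → ℝ} :
    Monotone fun t : ℝ≥0 => MeasurableSpace.comap (gg p t) (inferInstance : MeasurableSpace ℝ) := by
  intro s t hst
  have hφ : Measurable fun v : ℝ => if v < rr s then (-1:ℝ) else v :=
    Measurable.ite (measurableSet_lt measurable_id measurable_const) measurable_const measurable_id
  simp only
  rw [gg_comp p hst, ← MeasurableSpace.comap_comp]
  exact MeasurableSpace.comap_mono hφ.comap_le

lemma ff_split (p : Ω → ℝ) (t : ℝ≥0) {A : Set Ω}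
    (hA : MeasurableSet[MeasurableSpace.comap (gg p t) (inferInstance : MeasurableSpace ℝ)] A) :
    {ω | p ω < rr t} ⊆ A ∨ A ∩ {ω | p ω < rr t} = ∅ := by
  obtain ⟨B, -, rfl⟩ := hA
  by_cases hB : (-1:ℝ) ∈ B
  · left
    intro ω hω
    show gg p t ω ∈ B
    have hω' : p ω < rr t := hω
    rw [gg, if_pos hω']; exact hB
  · right
    ext ω
    simp only [Set.mem_inter_iff, Set.mem_empty_iff_false, iff_false, not_and]
    intro hωA hω
    apply hB
    have : gg p t ω = -1 := if_pos hω
    rw [← this]; exact hωA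

lemma gg_adapted {p : Ω → ℝ} (h01 : ∀ ω, p ω ∈ Set.Icc (0:ℝ) 1) (t : ℝ≥0) :
    StronglyMeasurable[MeasurableSpace.comap (gg p t) (inferInstance : MeasurableSpace ℝ)]
      (XX p t) := by
  by_cases h : (t : ℝ) < 1
  · rw [XX_eq_one p h]; exact stronglyMeasurable_const
  · rw [XX_eq_indicator h01 h]
    have hSet : {ω | p ω < rr t} = gg p t ⁻¹' {-1} := by
      ext ω
      simp only [Set.mem_setOf_eq, Set.mem_preimage, Set.mem_singleton_iff]
      constructor
      · intro h'; exact if_pos h'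
      · intro h'
        by_contra hc
        rw [gg, if_neg hc] at h'
        have := (h01 ω).1; linarith
    have hmeasSet : MeasurableSet[MeasurableSpace.comap (gg p t)
        (inferInstance : MeasurableSpace ℝ)] {ω | p ω < rr t} :=
      ⟨{-1}, measurableSet_singleton _, hSet.symm⟩
    exact stronglyMeasurable_const.indicator hmeasSet

end PPAux

open PPAux in
/-- For a precise p-test `p` (measurable, `[0,1]`-valued, with
`P{p ≤ δ} = δ` for all `δ ∈ [0,1]`), the explicit process
`X_t(ω) = 1` for `t ∈ [0,1)`, `X_t(ω) = t` for `t ∈ [1, 1/p(ω))` and `X_t(ω) = 0`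
otherwise, is (with respect to a suitable filtration) a test martingale in continuous
time whose running supremum equals `1/p` almost surely. -/
theorem precise_p_test_is_sup_of_test_martingale
    {Ω : Type*} {m : MeasurableSpace Ω} {P : Measure Ω} [IsProbabilityMeasure P]
    (p : Ω → ℝ) (hmeas : Measurable p) (h01 : ∀ ω, p ω ∈ Set.Icc (0 : ℝ) 1)
    (hprecise : ∀ δ ∈ Set.Icc (0 : ℝ) 1, P {ω | p ω ≤ δ} = ENNReal.ofReal δ) :
    ∃ ℱ : Filtration ℝ≥0 m,
      Martingale
        (fun (t : ℝ≥0) ω =>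
          if (t : ℝ) < 1 then (1 : ℝ)
          else if (t : ℝ≥0∞) < (ENNReal.ofReal (p ω))⁻¹ then (t : ℝ) else 0) ℱ P ∧
      (∀ (t : ℝ≥0) ω, (0 : ℝ) ≤
          if (t : ℝ) < 1 then (1 : ℝ)
          else if (t : ℝ≥0∞) < (ENNReal.ofReal (p ω))⁻¹ then (t : ℝ) else 0) ∧
      (∫ ω, (if ((0 : ℝ≥0) : ℝ) < 1 then (1 : ℝ)
          else if ((0 : ℝ≥0) : ℝ≥0∞) < (ENNReal.ofReal (p ω))⁻¹ then ((0 : ℝ≥0) : ℝ) else 0)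
          ∂P = 1) ∧
      (∀ᵐ ω ∂P,
        (⨆ t : ℝ≥0,
          if (t : ℝ) < 1 then (1 : ℝ)
          else if (t : ℝ≥0∞) < (ENNReal.ofReal (p ω))⁻¹ then (t : ℝ) else 0)
        = (p ω)⁻¹) := by
  classical
  -- measure of strict sublevel sets
  have hPlt : ∀ u : ℝ, 0 < u → u ≤ 1 → P {ω | p ω < u} = ENNReal.ofReal u := by
    intro u hu0 hu1
    apply le_antisymm
    · calc P {ω | p ω < u} ≤ P {ω | p ω ≤ u} := measure_mono (Set.setOf_subset_setOf.2 fun ω h => le_of_lt h)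
        _ = ENNReal.ofReal u := hprecise u ⟨hu0.le, hu1⟩
    · by_contra hcon
      push_neg at hcon
      set c := (P {ω | p ω < u}).toReal with hc
      have hfin : P {ω | p ω < u} ≠ ⊤ := measure_ne_top _ _
      have hc0 : 0 ≤ c := ENNReal.toReal_nonneg
      have hcu : c < u := by
        have := (ENNReal.toReal_lt_toReal hfin ENNReal.ofReal_ne_top).2 hcon
        rwa [ENNReal.toReal_ofReal hu0.le] at this
      have hδ : (c + u) / 2 ∈ Set.Icc (0:ℝ) 1 := ⟨by positivity, by linarith⟩
      have hsub : {ω | p ω ≤ (c + u) / 2} ⊆ {ω | p ω < u} :=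
        Set.setOf_subset_setOf.2 fun ω h => lt_of_le_of_lt h (by linarith)
      have hle : ENNReal.ofReal ((c + u) / 2) ≤ ENNReal.ofReal c := by
        calc ENNReal.ofReal ((c + u) / 2) = P {ω | p ω ≤ (c + u) / 2} :=
              (hprecise _ hδ).symm
          _ ≤ P {ω | p ω < u} := measure_mono hsub
          _ = ENNReal.ofReal c := (ENNReal.ofReal_toReal hfin).symm
      rw [ENNReal.ofReal_le_ofReal_iff hc0] at hle
      linarith
  have hP1 : P {ω | p ω < 1} = 1 := by rw [hPlt 1 one_pos le_rfl, ENNReal.ofReal_one]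
  have hP1c : P {ω | p ω < 1}ᶜ = 0 := by
    rw [measure_compl (measurableSet_lt hmeas measurable_const) (measure_ne_top _ _), hP1,
      measure_univ, tsub_self]
  -- integrability
  have hXint : ∀ t, Integrable (XX p t) P := by
    intro t
    by_cases h : (t : ℝ) < 1
    · rw [XX_eq_one p h]; exact integrable_const 1
    · rw [XX_eq_indicator h01 h]
      exact (integrable_const _).indicator (measurableSet_lt hmeas measurable_const)
  -- set integrals
  have hkey : ∀ (τ : ℝ≥0) (A : Set Ω), MeasurableSet A → ∀ u : ℝ, rr τ ≤ u → u ≤ 1 →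
      ({ω | p ω < u} ⊆ A → ∫ ω in A, XX p τ ω ∂P = 1) ∧
      (A ∩ {ω | p ω < u} = ∅ → ∫ ω in A, XX p τ ω ∂P = 0) := by
    intro τ A hA u hu hu1
    by_cases h : (τ : ℝ) < 1
    · have hrr1 : rr τ = 1 := if_pos h
      have hu_eq : u = 1 := le_antisymm hu1 (by rw [← hrr1]; exact hu)
      subst hu_eq
      rw [XX_eq_one p h]
      constructor
      · intro hsub
        have hPA : P A = 1 :=
          le_antisymm prob_le_one (by rw [← hP1]; exact measure_mono hsub)
        rw [setIntegral_const, Measure.real, hPA]; simp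
      · intro hdisj
        have hPA : P A = 0 := by
          refine measure_mono_null ?_ hP1c
          intro ω hω hlt
          exact absurd (Set.mem_inter hω hlt) (by rw [hdisj]; exact Set.notMem_empty ω)
        rw [setIntegral_const, Measure.real, hPA]; simp
    · have hτ1 : (1:ℝ) ≤ τ := not_lt.1 h
      have hrrτ : rr τ = (τ:ℝ)⁻¹ := if_neg h
      have hS : MeasurableSet {ω | p ω < rr τ} := measurableSet_lt hmeas measurable_const
      rw [XX_eq_indicator h01 h]
      constructor
      · intro hsub
        have hAS : A ∩ {ω | p ω < rr τ} = {ω | p ω < rr τ} :=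
          Set.inter_eq_self_of_subset_right
            (fun ω (hω : p ω < rr τ) => hsub (show p ω < u from lt_of_lt_of_le hω hu))
        rw [setIntegral_indicator hS, hAS, setIntegral_const, Measure.real,
          hPlt _ (rr_pos τ) (rr_le_one τ), ENNReal.toReal_ofReal (rr_pos τ).le, smul_eq_mul,
          hrrτ]
        have hτ0 : (τ:ℝ) ≠ 0 := by linarith
        field_simp
      · intro hdisj
        have hAS : A ∩ {ω | p ω < rr τ} = ∅ := by
          apply Set.eq_empty_of_subset_empty
          rw [← hdisj]
          exact Set.inter_subset_inter_right _
            (fun ω (hω : p ω < rr τ) => (lt_of_lt_of_le hω hu : p ω < u))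
        rw [setIntegral_indicator hS, hAS]
        simp
  -- the filtration
  refine ⟨⟨fun t => MeasurableSpace.comap (gg p t) (inferInstance : MeasurableSpace ℝ),
    ff_mono, fun t => (gg_measurable hmeas t).comap_le⟩, ?_, ?_, ?_, ?_⟩
  · -- martingale
    constructor
    · intro i
      exact gg_adapted h01 i
    · intro i j hij
      have hle : MeasurableSpace.comap (gg p i) (inferInstance : MeasurableSpace ℝ) ≤ m :=
        (gg_measurable hmeas i).comap_le
      refine ((ae_eq_condExp_of_forall_setIntegral_eq hle (hXint j)
        (fun A _ _ => (hXint i).integrableOn)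
        (fun A hA _ => ?_)
        (StronglyMeasurable.aestronglyMeasurable (gg_adapted h01 i))).symm :
          P[XX p j | _] =ᵐ[P] XX p i)
      have hAm : MeasurableSet A := hle A hA
      rcases ff_split p i hA with hsub | hdisj
      · rw [(hkey i A hAm (rr i) le_rfl (rr_le_one i)).1 hsub,
          (hkey j A hAm (rr i) (rr_anti hij) (rr_le_one i)).1 hsub]
      · rw [(hkey i A hAm (rr i) le_rfl (rr_le_one i)).2 hdisj,
          (hkey j A hAm (rr i) (rr_anti hij) (rr_le_one i)).2 hdisj]
  · -- nonnegativity
    intro t ω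
    split_ifs <;> positivity
  · -- integral at time 0
    have h0 : ((0 : ℝ≥0) : ℝ) < 1 := by norm_num
    simp [h0]
  · -- supremum
    have hae : ∀ᵐ ω ∂P, 0 < p ω := by
      have h0 : P {ω | p ω ≤ 0} = 0 := by
        simpa using hprecise 0 ⟨le_rfl, zero_le_one⟩
      rw [ae_iff]
      simpa only [not_lt] using h0
    refine hae.mono fun ω hp0 => ?_
    have hp1 := (h01 ω).2
    have hinv1 : (1:ℝ) ≤ (p ω)⁻¹ := (one_le_inv₀ hp0).2 hp1
    show (⨆ t : ℝ≥0, XX p t ω) = (p ω)⁻¹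
    have hboundf : ∀ t : ℝ≥0, XX p t ω ≤ (p ω)⁻¹ := by
      intro t
      rw [XX]
      split_ifs with h1 h2
      · exact hinv1
      · exact le_of_lt ((cond_iff' hp0 t).1 h2)
      · positivity
    have hbdd : BddAbove (Set.range fun t : ℝ≥0 => XX p t ω) := by
      refine ⟨(p ω)⁻¹, ?_⟩
      rintro x ⟨t, rfl⟩
      exact hboundf t
    apply le_antisymm
    · exact ciSup_le hboundf
    · apply le_of_forall_lt
      intro x hx
      by_cases hx1 : x < 1
      · have hX0 : XX p 0 ω = 1 := by rw [XX, if_pos (by norm_num)]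
        calc x < 1 := hx1
          _ = XX p 0 ω := hX0.symm
          _ ≤ ⨆ t : ℝ≥0, XX p t ω := le_ciSup hbdd 0
      · push_neg at hx1
        set y := (x + (p ω)⁻¹) / 2 with hy
        have hxy : x < y := by rw [hy]; linarith
        have hyc : y < (p ω)⁻¹ := by rw [hy]; linarith
        have hy1 : (1:ℝ) ≤ y := by linarith
        set t0 : ℝ≥0 := ⟨y, by linarith⟩ with ht0
        have ht0y : (t0 : ℝ) = y := rfl
        have hX : XX p t0 ω = y := by
          rw [XX, if_neg (by rw [ht0y]; linarith),
            if_pos ((cond_iff' hp0 t0).2 (by rw [ht0y]; exact hyc))]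
          exact ht0y
        calc x < y := hxy
          _ = XX p t0 ω := hX.symm
          _ ≤ ⨆ t : ℝ≥0, XX p t ω := le_ciSup hbdd t0
end

section
/- Let f : [0,1] → [0,∞] be an increasing function with ∫₀¹ (1/f(x)) dx ≤ 1. Then f is a calibrator: for every probability space (Ω, F, P) and every p-test p on it, ∫ (1/f(p)) dP ≤ 1, i.e. f(p) is a Bayes factor for P. -/
open MeasureTheory ENNReal

/-- An increasing function `f : [0,1] → [0,∞]` with
`∫₀¹ (1/f(x)) dx ≤ 1` is a calibrator: for every probability space `(Ω, F, P)` and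
every p-test `p` on it, `∫ (1/f(p)) dP ≤ 1`, i.e. `f ∘ p` is a Bayes factor for `P`. -/
theorem increasing_with_small_integral_is_calibrator
    (f : ℝ → ℝ≥0∞)
    (hmono : MonotoneOn f (Set.Icc (0 : ℝ) 1))
    (hint : ∫⁻ x in Set.Icc (0 : ℝ) 1, (f x)⁻¹ ≤ 1)
    {Ω : Type*} {m : MeasurableSpace Ω} (P : Measure Ω) [IsProbabilityMeasure P]
    (p : Ω → ℝ) (hmeas : Measurable p) (h01 : ∀ ω, p ω ∈ Set.Icc (0 : ℝ) 1)
    (hptest : ∀ δ ∈ Set.Icc (0 : ℝ) 1, P {ω | p ω ≤ δ} ≤ ENNReal.ofReal δ) :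
    ∫⁻ ω, (f (p ω))⁻¹ ∂P ≤ 1 := by
  -- key comparison for lower sets
  have key : ∀ L : Set ℝ, IsLowerSet L →
      P (p ⁻¹' L) ≤ volume (L ∩ Set.Icc (0 : ℝ) 1) := by
    intro L hL
    rcases (L ∩ Set.Icc (0:ℝ) 1).eq_empty_or_nonempty with hS | hS
    · have hempty : p ⁻¹' L = ∅ := by
        ext ω
        simp only [Set.mem_preimage, Set.mem_empty_iff_false, iff_false]
        intro h
        exact absurd (Set.mem_inter h (h01 ω)) (by simp [hS])
      simp [hempty]
    · set s := sSup (L ∩ Set.Icc (0:ℝ) 1) with hsdef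
      have hbdd : BddAbove (L ∩ Set.Icc (0:ℝ) 1) := ⟨1, fun x hx => hx.2.2⟩
      have hs1 : s ≤ 1 := csSup_le hS fun x hx => hx.2.2
      have hs0 : 0 ≤ s := by
        obtain ⟨x, hx⟩ := hS
        exact le_trans hx.2.1 (le_csSup hbdd hx)
      calc P (p ⁻¹' L) ≤ P {ω | p ω ≤ s} :=
            measure_mono fun ω hω => le_csSup hbdd ⟨hω, h01 ω⟩
        _ ≤ ENNReal.ofReal s := hptest s ⟨hs0, hs1⟩
        _ = volume (Set.Ico (0:ℝ) s) := by rw [Real.volume_Ico, sub_zero]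
        _ ≤ volume (L ∩ Set.Icc 0 1) := by
            refine measure_mono fun y hy => ?_
            obtain ⟨x, hx, hyx⟩ := exists_lt_of_lt_csSup hS hy.2
            exact ⟨hL hyx.le hx.1, hy.1, hyx.le.trans hx.2.2⟩
  -- monotone extension of f by clamping
  set F : ℝ → ℝ≥0∞ := fun x => f (max 0 (min x 1)) with hFdef
  have hclamp_mem : ∀ x : ℝ, max 0 (min x 1) ∈ Set.Icc (0:ℝ) 1 := fun x =>
    ⟨le_max_left _ _, max_le zero_le_one (min_le_right _ _)⟩
  have hFmono : Monotone F := fun x y hxy =>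
    hmono (hclamp_mem x) (hclamp_mem y)
      (max_le_max le_rfl (min_le_min hxy le_rfl))
  set G : ℝ → ℝ≥0∞ := fun x => (F x)⁻¹ with hGdef
  have hGmeas : Measurable G := hFmono.measurable.inv
  have hGanti : Antitone G := fun x y hxy => ENNReal.inv_le_inv' (hFmono hxy)
  have hclamp : ∀ x ∈ Set.Icc (0:ℝ) 1, max 0 (min x 1) = x := fun x hx => by
    rw [min_eq_left hx.2, max_eq_right hx.1]
  have hfp : ∀ ω, (f (p ω))⁻¹ = G (p ω) := fun ω => by
    simp only [hGdef, hFdef, hclamp _ (h01 ω)]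
  have hint' : ∫⁻ x in Set.Icc (0:ℝ) 1, G x ≤ 1 := by
    refine le_trans (le_of_eq ?_) hint
    refine setLIntegral_congr_fun measurableSet_Icc (fun x hx => ?_)
    simp only [hGdef, hFdef, hclamp _ hx]
  simp only [hfp]
  -- truncation bound
  have trunc : ∀ n : ℕ, ∫⁻ ω, min (G (p ω)) (n : ℝ≥0∞) ∂P ≤ 1 := by
    intro n
    have hne : ∀ x : ℝ≥0∞, min x (n : ℝ≥0∞) ≠ ∞ := fun x =>
      ne_top_of_le_ne_top (ENNReal.natCast_ne_top n) (min_le_right _ _)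
    set gR : ℝ → ℝ := fun x => (min (G x) (n : ℝ≥0∞)).toReal with hgRdef
    have hgmeas : Measurable gR := (hGmeas.min measurable_const).ennreal_toReal
    have hgR_anti : Antitone gR := fun x y hxy =>
      (ENNReal.toReal_le_toReal (hne _) (hne _)).mpr
        (min_le_min (hGanti hxy) le_rfl)
    have hgR_nn : ∀ x, 0 ≤ gR x := fun x => ENNReal.toReal_nonneg
    have h1 : ∫⁻ ω, min (G (p ω)) (n : ℝ≥0∞) ∂P
        = ∫⁻ t in Set.Ioi (0:ℝ), P {ω | t < gR (p ω)} := by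
      rw [← lintegral_eq_lintegral_meas_lt P (ae_of_all _ fun ω => hgR_nn (p ω))
        ((hgmeas.comp hmeas).aemeasurable)]
      exact lintegral_congr fun ω => (ENNReal.ofReal_toReal (hne (G (p ω)))).symm
    have h2 : ∫⁻ t in Set.Ioi (0:ℝ),
          (volume.restrict (Set.Icc (0:ℝ) 1)) {x | t < gR x}
        = ∫⁻ x in Set.Icc (0:ℝ) 1, min (G x) (n : ℝ≥0∞) := by
      rw [← lintegral_eq_lintegral_meas_lt _ (ae_of_all _ hgR_nn) hgmeas.aemeasurable]
      exact lintegral_congr fun x => ENNReal.ofReal_toReal (hne (G x))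
    have mid : ∀ t : ℝ, P {ω | t < gR (p ω)}
        ≤ (volume.restrict (Set.Icc (0:ℝ) 1)) {x | t < gR x} := by
      intro t
      rw [Measure.restrict_apply' measurableSet_Icc]
      exact key {x | t < gR x} (fun a b hba ha => ha.trans_le (hgR_anti hba))
    calc ∫⁻ ω, min (G (p ω)) (n : ℝ≥0∞) ∂P
        = ∫⁻ t in Set.Ioi (0:ℝ), P {ω | t < gR (p ω)} := h1
      _ ≤ ∫⁻ t in Set.Ioi (0:ℝ),
            (volume.restrict (Set.Icc (0:ℝ) 1)) {x | t < gR x} :=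
          lintegral_mono fun t => mid t
      _ = ∫⁻ x in Set.Icc (0:ℝ) 1, min (G x) (n : ℝ≥0∞) := h2
      _ ≤ ∫⁻ x in Set.Icc (0:ℝ) 1, G x := lintegral_mono fun x => min_le_left _ _
      _ ≤ 1 := hint'
  -- monotone convergence
  have hsup : ∀ x : ℝ≥0∞, (⨆ n : ℕ, min x (n : ℝ≥0∞)) = x := by
    intro x
    refine le_antisymm (iSup_le fun n => min_le_left _ _) ?_
    rcases eq_or_ne x ∞ with hx | hx
    · subst hx
      have : ∀ n : ℕ, min (∞ : ℝ≥0∞) (n : ℝ≥0∞) = (n : ℝ≥0∞) := fun n =>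
        min_eq_right le_top
      simp only [this]
      simp [ENNReal.iSup_natCast]
    · obtain ⟨k, hk⟩ := ENNReal.exists_nat_gt hx
      calc x = min x (k : ℝ≥0∞) := (min_eq_left hk.le).symm
        _ ≤ ⨆ n : ℕ, min x (n : ℝ≥0∞) := le_iSup (fun n : ℕ => min x (n : ℝ≥0∞)) k
  have hmc : ∫⁻ ω, G (p ω) ∂P = ⨆ n : ℕ, ∫⁻ ω, min (G (p ω)) (n : ℝ≥0∞) ∂P := by
    have hGp : Measurable fun ω => G (p ω) := hGmeas.comp hmeas
    rw [← lintegral_iSup (fun n => hGp.min measurable_const)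
      (fun i j hij ω => min_le_min le_rfl (Nat.cast_le.mpr hij))]
    exact lintegral_congr fun ω => (hsup _).symm
  rw [hmc]
  exact iSup_le trunc
end

section
/- Every calibrator is dominated by an admissible calibrator: if f : [0,1] → [0,∞] is an increasing function with ∫₀¹ (1/f(x)) dx ≤ 1, then there exists an increasing function g : [0,1] → [0,∞] with g(x) ≤ f(x) for all x ∈ [0,1], g left-continuous, and ∫₀¹ (1/g(x)) dx = 1. -/
open MeasureTheory ENNReal Filter Topology

/-- Every calibrator is dominated by an admissible calibrator: if
`f : [0,1] → [0,∞]` is increasing with `∫₀¹ (1/f(x)) dx ≤ 1`, then there is an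
increasing function `g : [0,1] → [0,∞]` with `g ≤ f` on `[0,1]`, `g` left-continuous,
and `∫₀¹ (1/g(x)) dx = 1`. -/
theorem calibrator_dominated_by_admissible
    (f : ℝ → ℝ≥0∞)
    (hmono : MonotoneOn f (Set.Icc (0 : ℝ) 1))
    (hint : ∫⁻ x in Set.Icc (0 : ℝ) 1, (f x)⁻¹ ≤ 1) :
    ∃ g : ℝ → ℝ≥0∞,
      MonotoneOn g (Set.Icc (0 : ℝ) 1) ∧
      (∀ x ∈ Set.Icc (0 : ℝ) 1, g x ≤ f x) ∧
      (∀ x ∈ Set.Icc (0 : ℝ) 1, Tendsto g (nhdsWithin x (Set.Ico 0 x)) (𝓝 (g x))) ∧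
      ∫⁻ x in Set.Icc (0 : ℝ) 1, (g x)⁻¹ = 1 := by
  classical
  set F : ℝ → ℝ≥0∞ := fun x => sSup (f '' Set.Ico 0 x) with hFdef
  have hFmono : Monotone F := fun a b hab =>
    sSup_le_sSup (Set.image_mono (Set.Ico_subset_Ico_right hab))
  have hFmeas : Measurable F := hFmono.measurable
  have hFle : ∀ x ∈ Set.Icc (0:ℝ) 1, F x ≤ f x := by
    intro x hx
    refine sSup_le ?_
    rintro _ ⟨y, hy, rfl⟩
    exact hmono ⟨hy.1, hy.2.le.trans hx.2⟩ hx hy.2.le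
  have hfleF : ∀ x x' : ℝ, 0 ≤ x → x < x' → f x ≤ F x' := fun x x' h0 hlt =>
    le_sSup ⟨x, ⟨h0, hlt⟩, rfl⟩
  -- F = f a.e. on Icc 0 1
  have hbad : Set.Countable {x | x ∈ Set.Ioc (0:ℝ) 1 ∧ F x < f x} := by
    have hsub : {x | x ∈ Set.Ioc (0:ℝ) 1 ∧ F x < f x} ⊆
        ⋃ q : ℚ, {x | x ∈ Set.Ioc (0:ℝ) 1 ∧ F x < Real.toNNReal q ∧
          (Real.toNNReal q : ℝ≥0∞) < f x} := by
      intro x hx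
      obtain ⟨q, _, h1, h2⟩ := ENNReal.lt_iff_exists_rat_btwn.1 hx.2
      exact Set.mem_iUnion.2 ⟨q, hx.1, h1, h2⟩
    refine Set.Countable.mono hsub (Set.countable_iUnion fun q => ?_)
    refine Set.Subsingleton.countable ?_
    intro x hx y hy
    by_contra hne
    rcases lt_or_gt_of_ne hne with h | h
    · exact absurd ((hfleF x y hx.1.1.le h).trans_lt hy.2.1)
        (not_lt_of_ge hx.2.2.le)
    · exact absurd ((hfleF y x hy.1.1.le h).trans_lt hx.2.1)
        (not_lt_of_ge hy.2.2.le)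
  have haeF : ∀ᵐ x ∂(volume.restrict (Set.Icc (0:ℝ) 1)), F x = f x := by
    rw [ae_iff, Measure.restrict_apply' measurableSet_Icc]
    refine measure_mono_null (fun x hx => ?_)
      (measure_union_null (measure_singleton (0:ℝ))
        (Set.Countable.measure_zero hbad _))
    rcases hx with ⟨hne, hmem⟩
    rcases eq_or_lt_of_le hmem.1 with h0 | h0
    · exact Or.inl h0.symm
    · exact Or.inr ⟨⟨h0, hmem.2⟩, lt_of_le_of_ne (hFle x hmem) hne⟩
  have hintF : ∫⁻ x in Set.Icc (0:ℝ) 1, (F x)⁻¹ ≤ 1 := by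
    refine le_trans (le_of_eq (lintegral_congr_ae ?_)) hint
    exact haeF.mono fun x hx => by simp only [hx]
  -- the family K
  set K : ℝ≥0∞ → ℝ≥0∞ := fun s => ∫⁻ x in Set.Icc (0:ℝ) 1, max (F x)⁻¹ s with hKdef
  have hvol : volume (Set.Icc (0:ℝ) 1) = 1 := by
    rw [Real.volume_Icc]; norm_num
  have hKmono : Monotone K := fun s t hst =>
    lintegral_mono fun x => max_le_max le_rfl hst
  have hK0 : K 0 ≤ 1 := by
    refine le_trans (le_of_eq ?_) hintF
    exact lintegral_congr fun x => by simp
  have hKge : ∀ s, s ≤ K s := by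
    intro s
    calc s = s * volume (Set.Icc (0:ℝ) 1) := by rw [hvol, mul_one]
    _ = ∫⁻ _ in Set.Icc (0:ℝ) 1, s := (setLIntegral_const _ _).symm
    _ ≤ K s := lintegral_mono fun x => le_max_right _ _
  have hKadd : ∀ s t : ℝ≥0∞, K (s + t) ≤ K s + t := by
    intro s t
    calc K (s + t) ≤ ∫⁻ x in Set.Icc (0:ℝ) 1, (max (F x)⁻¹ s + t) := by
          refine lintegral_mono fun x => ?_
          rcases le_total (F x)⁻¹ (s + t) with h | h
          · rw [max_eq_right h]; exact add_le_add (le_max_right _ _) le_rfl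
          · rw [max_eq_left h]; exact le_add_right (le_max_left _ _)
    _ = K s + t * volume (Set.Icc (0:ℝ) 1) := by
          rw [lintegral_add_right _ measurable_const, setLIntegral_const]
    _ = K s + t := by rw [hvol, mul_one]
  set S : Set ℝ≥0∞ := {s | K s ≤ 1} with hSdef
  have hS0 : (0 : ℝ≥0∞) ∈ S := hK0
  set s₀ : ℝ≥0∞ := sSup S with hs₀def
  have hs₀le : s₀ ≤ 1 := sSup_le fun s hs => (hKge s).trans hs
  have hs₀ne : s₀ ≠ ⊤ := (hs₀le.trans_lt (by norm_num)).ne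
  -- K s₀ ≤ 1
  obtain ⟨u, humono, hutend, humem⟩ := exists_seq_tendsto_sSup ⟨0, hS0⟩ (OrderTop.bddAbove S)
  have husup : (⨆ n, u n) = s₀ :=
    tendsto_nhds_unique (tendsto_atTop_iSup humono) hutend
  have hKs₀le : K s₀ ≤ 1 := by
    have h1 : K s₀ = ⨆ n, K (u n) := by
      rw [hKdef]
      simp only
      rw [← lintegral_iSup (f := fun n x => max (F x)⁻¹ (u n)) (fun n => (hFmeas.inv.max measurable_const))
        (fun n m hnm x => max_le_max le_rfl (humono hnm))]
      refine lintegral_congr fun x => ?_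
      rw [← husup]
      exact sup_iSup
    rw [h1]
    exact iSup_le fun n => humem n
  have hKs₀ge : 1 ≤ K s₀ := by
    by_contra hlt
    push_neg at hlt
    have hε : (1 : ℝ≥0∞) - K s₀ ≠ 0 := by
      simpa [tsub_eq_zero_iff_le] using (not_le_of_gt hlt)
    have hKmem : s₀ + (1 - K s₀) ∈ S := by
      refine le_trans (hKadd s₀ _) ?_
      rw [add_tsub_cancel_of_le hlt.le]
    have := le_sSup hKmem
    rw [← hs₀def] at this
    exact absurd this (not_le_of_gt (ENNReal.lt_add_right hs₀ne hε))
  have hKs₀ : K s₀ = 1 := le_antisymm hKs₀le hKs₀ge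
  -- define g
  refine ⟨fun x => min (F x) s₀⁻¹, ?_, ?_, ?_, ?_⟩
  · exact fun a _ b _ hab => min_le_min (hFmono hab) le_rfl
  · exact fun x hx => le_trans (min_le_left _ _) (hFle x hx)
  · intro x hx
    rcases le_or_gt x 0 with hx0 | hx0
    · have : Set.Ico (0:ℝ) x = ∅ := Set.Ico_eq_empty (by simpa using hx0)
      rw [this]
      simp [nhdsWithin_empty]
    · have hsup : sSup (F '' Set.Iio x) = F x := by
        refine le_antisymm (sSup_le ?_) ?_
        · rintro _ ⟨y, hy, rfl⟩
          exact hFmono hy.le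
        · refine sSup_le ?_
          rintro _ ⟨y, hy, rfl⟩
          obtain ⟨z, hz1, hz2⟩ := exists_between hy.2
          exact le_trans (hfleF y z hy.1 hz1) (le_sSup ⟨z, hz2, rfl⟩)
      have hFt : Tendsto F (𝓝[<] x) (𝓝 (F x)) := by
        have := hFmono.tendsto_nhdsLT x
        rwa [hsup] at this
      have hFt' : Tendsto F (𝓝[Set.Ico 0 x] x) (𝓝 (F x)) :=
        hFt.mono_left (nhdsWithin_mono x Set.Ico_subset_Iio_self)
      exact hFt'.min tendsto_const_nhds
  · have hinv : ∀ x, (min (F x) s₀⁻¹)⁻¹ = max (F x)⁻¹ s₀ := by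
      intro x
      rcases le_total (F x) s₀⁻¹ with h | h
      · rw [min_eq_left h, max_eq_left]
        rw [← inv_inv s₀]
        exact ENNReal.inv_le_inv.2 h
      · rw [min_eq_right h, max_eq_right, inv_inv]
        rw [← inv_inv s₀]
        exact ENNReal.inv_le_inv.2 h
    calc ∫⁻ x in Set.Icc (0:ℝ) 1, (min (F x) s₀⁻¹)⁻¹
        = K s₀ := lintegral_congr fun x => hinv x
    _ = 1 := hKs₀
end

section
/- For every α ∈ (0,1), the function f(x) := x^{1−α}/α is a calibrator: for every probability space (Ω, F, P) and every p-test p on it, ∫ α · p^{α−1} dP ≤ 1. -/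
set_option maxHeartbeats 1000000


open MeasureTheory ENNReal

/-- For every `α ∈ (0,1)`, the function `f(x) = x^{1-α}/α` is a
calibrator: for every probability space `(Ω, F, P)` and every p-test `p` on it,
`∫ α·p^{α-1} dP ≤ 1` (the integrand being read in `[0,∞]`, with value `∞` at `p = 0`). -/
theorem power_function_is_calibrator
    (α : ℝ) (hα : α ∈ Set.Ioo (0 : ℝ) 1)
    {Ω : Type*} {m : MeasurableSpace Ω} (P : Measure Ω) [IsProbabilityMeasure P]
    (p : Ω → ℝ) (hmeas : Measurable p) (h01 : ∀ ω, p ω ∈ Set.Icc (0 : ℝ) 1)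
    (hptest : ∀ δ ∈ Set.Icc (0 : ℝ) 1, P {ω | p ω ≤ δ} ≤ ENNReal.ofReal δ) :
    ∫⁻ ω, ENNReal.ofReal α * (ENNReal.ofReal (p ω)) ^ (α - 1) ∂P ≤ 1 := by
  obtain ⟨hα0, hα1⟩ := hα
  set c : ℝ := α * (1 - α) with hc
  have hc0 : 0 ≤ c := mul_nonneg hα0.le (by linarith)
  set F : ℝ → ℝ≥0∞ := fun t => ENNReal.ofReal (c * t ^ (α - 2)) with hF
  -- p is a.e. positive
  have hnull : P {ω | p ω ≤ 0} = 0 :=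
    le_antisymm (by simpa using hptest 0 ⟨le_refl 0, zero_le_one⟩) zero_le
  have hae : ∀ᵐ ω ∂P, 0 < p ω := by
    rw [ae_iff]
    simpa [not_lt] using hnull
  -- the key pointwise identity for x ∈ (0,1]
  have key : ∀ x ∈ Set.Ioc (0 : ℝ) 1,
      ENNReal.ofReal α * (ENNReal.ofReal x) ^ (α - 1)
        = ENNReal.ofReal α
          + ∫⁻ t in Set.Ioc (0 : ℝ) 1, (if x ≤ t then F t else 0) := by
    intro x hx
    obtain ⟨hx0, hx1⟩ := hx
    -- first rewrite the inner integral as an integral over Ioc x 1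
    have hind : (fun t => if x ≤ t then F t else 0)
        = Set.indicator (Set.Ici x) F := by
      ext t
      by_cases h : x ≤ t <;> simp [Set.indicator, h]
    have hres : ∫⁻ t in Set.Ioc (0 : ℝ) 1, (if x ≤ t then F t else 0)
        = ∫⁻ t in Set.Ioc x 1, F t := by
      rw [hind, lintegral_indicator measurableSet_Ici,
        Measure.restrict_restrict measurableSet_Ici]
      have hset : Set.Ici x ∩ Set.Ioc (0 : ℝ) 1 = Set.Icc x 1 := by
        ext t
        constructor
        · rintro ⟨h1, _, h3⟩; exact ⟨h1, h3⟩
        · rintro ⟨h1, h2⟩; exact ⟨h1, lt_of_lt_of_le hx0 h1, h2⟩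
      rw [hset, ← Measure.restrict_congr_set (Ioc_ae_eq_Icc (a := x) (b := (1:ℝ)) (μ := volume))]
    rw [hres]
    -- compute ∫⁻ t in Ioc x 1, F t
    have hInt : IntegrableOn (fun t => c * t ^ (α - 2)) (Set.Ioc x 1) := by
      have hnot : (0:ℝ) ∉ Set.uIcc x 1 := by
        rw [Set.uIcc_of_le hx1]
        intro h
        exact absurd h.1 (not_le.2 hx0)
      have : IntervalIntegrable (fun t : ℝ => t ^ (α - 2)) volume x 1 :=
        intervalIntegral.intervalIntegrable_rpow (Or.inr hnot)
      exact (this.const_mul c).1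
    have hnn : 0 ≤ᵐ[volume.restrict (Set.Ioc x 1)] fun t => c * t ^ (α - 2) := by
      filter_upwards [ae_restrict_mem measurableSet_Ioc] with t ht
      exact mul_nonneg hc0 (Real.rpow_nonneg (le_of_lt (lt_trans hx0 ht.1)) _)
    have hval : ∫ t in Set.Ioc x 1, c * t ^ (α - 2) = α * x ^ (α - 1) - α := by
      rw [← intervalIntegral.integral_of_le hx1, intervalIntegral.integral_const_mul]
      rw [integral_rpow (Or.inr ⟨by linarith, by
        intro h
        rw [Set.uIcc_of_le hx1] at h
        exact absurd h.1 (not_le.2 hx0)⟩)]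
      have hα2 : α - 2 + 1 = α - 1 := by ring
      rw [hα2, Real.one_rpow]
      have hne : α - 1 ≠ 0 := by linarith
      field_simp
      ring
    have hlF : ∫⁻ t in Set.Ioc x 1, F t = ENNReal.ofReal (α * x ^ (α - 1) - α) := by
      rw [hF, ← ofReal_integral_eq_lintegral_ofReal hInt hnn, hval]
    rw [hlF]
    -- combine
    have hxpow : (1 : ℝ) ≤ x ^ (α - 1) := by
      have h := Real.rpow_le_rpow_of_exponent_ge hx0 hx1
        (show α - 1 ≤ (0:ℝ) by linarith)
      simpa using h
    have hge : 0 ≤ α * x ^ (α - 1) - α := by nlinarith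
    rw [← ENNReal.ofReal_add hα0.le hge, ENNReal.ofReal_rpow_of_pos hx0,
      ← ENNReal.ofReal_mul hα0.le]
    congr 1
    ring
  -- rewrite the main integrand a.e.
  have hcongr : ∫⁻ ω, ENNReal.ofReal α * (ENNReal.ofReal (p ω)) ^ (α - 1) ∂P
      = ∫⁻ ω, (ENNReal.ofReal α
          + ∫⁻ t in Set.Ioc (0 : ℝ) 1, (if p ω ≤ t then F t else 0)) ∂P := by
    apply lintegral_congr_ae
    filter_upwards [hae] with ω hω
    exact key (p ω) ⟨hω, (h01 ω).2⟩
  rw [hcongr]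
  -- measurability of the two-variable function
  have hFm : Measurable F := by
    apply ENNReal.measurable_ofReal.comp
    fun_prop
  have hmeas2 : Measurable (fun z : Ω × ℝ => if p z.1 ≤ z.2 then F z.2 else 0) := by
    apply Measurable.ite _ (hFm.comp measurable_snd) measurable_const
    exact measurableSet_le (hmeas.comp measurable_fst) measurable_snd
  rw [lintegral_add_left measurable_const, lintegral_const, measure_univ, mul_one]
  -- swap the order of integration (Tonelli)
  have hswap : ∫⁻ ω, (∫⁻ t in Set.Ioc (0 : ℝ) 1, (if p ω ≤ t then F t else 0)) ∂P
      = ∫⁻ t in Set.Ioc (0 : ℝ) 1, (∫⁻ ω, (if p ω ≤ t then F t else 0) ∂P) := by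
    exact lintegral_lintegral_swap (hmeas2.aemeasurable)
  rw [hswap]
  -- bound the inner integral using the p-test property
  have hbound : ∫⁻ t in Set.Ioc (0 : ℝ) 1, (∫⁻ ω, (if p ω ≤ t then F t else 0) ∂P)
      ≤ ∫⁻ t in Set.Ioc (0 : ℝ) 1, ENNReal.ofReal (c * t ^ (α - 1)) := by
    apply setLIntegral_mono' measurableSet_Ioc
    intro t ht
    have hinner : ∫⁻ ω, (if p ω ≤ t then F t else 0) ∂P = F t * P {ω | p ω ≤ t} := by
      have : (fun ω => if p ω ≤ t then F t else 0)
          = Set.indicator {ω | p ω ≤ t} (fun _ => F t) := by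
        ext ω
        by_cases h : p ω ≤ t <;> simp [Set.indicator, h]
      rw [this, lintegral_indicator_const (measurableSet_le hmeas measurable_const)]
    rw [hinner]
    calc F t * P {ω | p ω ≤ t} ≤ F t * ENNReal.ofReal t := by
          exact mul_le_mul_right (hptest t ⟨ht.1.le, ht.2⟩) _
      _ = ENNReal.ofReal (c * t ^ (α - 1)) := by
          rw [hF, ← ENNReal.ofReal_mul (mul_nonneg hc0 (Real.rpow_nonneg ht.1.le _))]
          congr 1
          rw [mul_assoc, ← Real.rpow_add_one (ne_of_gt ht.1)]
          ring_nf
  -- compute the final integral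
  have hfin : ∫⁻ t in Set.Ioc (0 : ℝ) 1, ENNReal.ofReal (c * t ^ (α - 1))
      = ENNReal.ofReal (1 - α) := by
    have hInt : IntegrableOn (fun t => c * t ^ (α - 1)) (Set.Ioc (0:ℝ) 1) := by
      have : IntervalIntegrable (fun t : ℝ => t ^ (α - 1)) volume 0 1 :=
        intervalIntegral.intervalIntegrable_rpow' (by linarith)
      exact (this.const_mul c).1
    have hnn : 0 ≤ᵐ[volume.restrict (Set.Ioc (0:ℝ) 1)] fun t => c * t ^ (α - 1) := by
      filter_upwards [ae_restrict_mem measurableSet_Ioc] with t ht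
      exact mul_nonneg hc0 (Real.rpow_nonneg ht.1.le _)
    rw [← ofReal_integral_eq_lintegral_ofReal hInt hnn]
    congr 1
    rw [← intervalIntegral.integral_of_le zero_le_one, intervalIntegral.integral_const_mul]
    rw [integral_rpow (Or.inl (by linarith))]
    have : α - 1 + 1 = α := by ring
    rw [this, Real.one_rpow, Real.zero_rpow (ne_of_gt hα0)]
    field_simp
    ring
  calc ENNReal.ofReal α + ∫⁻ t in Set.Ioc (0 : ℝ) 1, (∫⁻ ω, (if p ω ≤ t then F t else 0) ∂P)
      ≤ ENNReal.ofReal α + ENNReal.ofReal (1 - α) := by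
        rw [← hfin] at *
        exact add_le_add_right hbound _
    _ = 1 := by
        rw [← ENNReal.ofReal_add hα0.le (by linarith)]
        simp
end

section
/- For every α > 0, the function f : [0,1] → [0,∞] defined by f(x) := α^{-1}(1+α)^{-α} · x · (ln(1/x))^{1+α} for x ≤ e^{-1-α} and f(x) := ∞ for x > e^{-1-α} is an admissible calibrator; in particular, for every probability space (Ω, F, P) and every p-test p on it, ∫ (1/f(p)) dP ≤ 1, and ∫₀¹ (1/f(x)) dx = 1. -/
open MeasureTheory ENNReal

/-- The calibrator `f(x) = α⁻¹ (1+α)^{-α} x ln^{1+α}(1/x)` for `x ≤ e^{-1-α}`,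
and `f(x) = ∞` otherwise. -/
noncomputable def logCalibrator (α : ℝ) : ℝ → ℝ≥0∞ := fun x =>
  if x ≤ Real.exp (-(1 + α)) then
    ENNReal.ofReal (α⁻¹ * (1 + α) ^ (-α) * x * (Real.log (1 / x)) ^ (1 + α))
  else ∞

lemma keyA {α u v : ℝ} (hα : 0 < α) (hu : 1 + α ≤ u) (huv : u ≤ v) :
    Real.exp (-v) * v ^ (1 + α) ≤ Real.exp (-u) * u ^ (1 + α) := by
  have hu0 : 0 < u := lt_of_lt_of_le (by linarith) hu
  have hv0 : 0 < v := lt_of_lt_of_le hu0 huv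
  have h1 : v ^ (1+α) = u ^ (1+α) * (v/u) ^ (1+α) := by
    rw [← Real.mul_rpow hu0.le (by positivity)]
    congr 1; field_simp
  have h2 : (v/u) ^ (1+α) ≤ Real.exp (v - u) := by
    rw [Real.rpow_def_of_pos (by positivity)]
    apply Real.exp_le_exp.2
    have hlog : Real.log (v/u) ≤ v/u - 1 := Real.log_le_sub_one_of_pos (by positivity)
    have h3 : (v/u - 1) * (1+α) ≤ v - u := by
      rw [div_sub_one hu0.ne', div_mul_eq_mul_div, div_le_iff₀ hu0]
      nlinarith
    calc Real.log (v/u) * (1+α) ≤ (v/u - 1) * (1+α) := by nlinarith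
      _ ≤ v - u := h3
  calc Real.exp (-v) * v ^ (1+α) = Real.exp (-v) * (u ^ (1+α) * (v/u) ^ (1+α)) := by rw [← h1]
    _ ≤ Real.exp (-v) * (u ^ (1+α) * Real.exp (v - u)) := by
        gcongr
    _ = Real.exp (-u) * u ^ (1+α) := by
        rw [show Real.exp (-v) * (u ^ (1+α) * Real.exp (v-u)) = Real.exp (-v) * Real.exp (v-u) * u ^ (1+α) by ring, ← Real.exp_add]
        ring_nf

noncomputable def Fc (α : ℝ) (x : ℝ) : ℝ :=
  α⁻¹ * (1 + α) ^ (-α) * x * (Real.log (1 / x)) ^ (1 + α)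


lemma logCalibrator_eq (α x : ℝ) :
    logCalibrator α x = if x ≤ Real.exp (-(1 + α)) then ENNReal.ofReal (Fc α x) else ∞ := rfl

lemma theta_lt_one {α : ℝ} (hα : 0 < α) : Real.exp (-(1 + α)) < 1 :=
  Real.exp_lt_one_iff.2 (by linarith)

lemma theta_pos (α : ℝ) : 0 < Real.exp (-(1 + α)) := Real.exp_pos _

lemma Fc_pos {α x : ℝ} (hα : 0 < α) (hx0 : 0 < x) (hx : x ≤ Real.exp (-(1 + α))) :
    0 < Fc α x := by
  have hx1 : x < 1 := lt_of_le_of_lt hx (theta_lt_one hα)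
  have hlog : 0 < Real.log (1 / x) := Real.log_pos (by rw [lt_div_iff₀ hx0]; linarith)
  exact mul_pos (mul_pos (mul_pos (inv_pos.2 hα) (Real.rpow_pos_of_pos (by linarith) _)) hx0)
    (Real.rpow_pos_of_pos hlog _)

lemma Fc_nonneg {α x : ℝ} (hα : 0 < α) (hx0 : 0 ≤ x) (hx : x ≤ Real.exp (-(1 + α))) :
    0 ≤ Fc α x := by
  rcases eq_or_lt_of_le hx0 with h | h
  · simp [Fc, ← h, Real.log_zero]
  · exact (Fc_pos hα h hx).le

lemma Fc_mono {α x y : ℝ} (hα : 0 < α) (hx : 0 ≤ x) (hxy : x ≤ y)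
    (hy : y ≤ Real.exp (-(1 + α))) : Fc α x ≤ Fc α y := by
  rcases eq_or_lt_of_le hx with h | hx0
  · rw [← h]
    exact le_trans (le_of_eq (by simp [Fc, Real.log_zero])) (Fc_nonneg hα (hx.trans hxy) hy)
  · have hy0 : 0 < y := lt_of_lt_of_le hx0 hxy
    unfold Fc
    have hc : 0 ≤ α⁻¹ * (1 + α) ^ (-α) := by positivity
    rw [mul_assoc _ x, mul_assoc _ y]
    apply mul_le_mul_of_nonneg_left _ hc
    obtain ⟨v, rfl⟩ : ∃ v, x = Real.exp (-v) :=
      ⟨-Real.log x, by rw [neg_neg, Real.exp_log hx0]⟩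
    obtain ⟨u, rfl⟩ : ∃ u, y = Real.exp (-u) :=
      ⟨-Real.log y, by rw [neg_neg, Real.exp_log hy0]⟩
    rw [one_div, one_div, ← Real.exp_neg, ← Real.exp_neg, Real.log_exp, Real.log_exp,
      neg_neg, neg_neg]
    apply keyA hα
    · have := Real.exp_le_exp.1 hy; linarith
    · have := Real.exp_le_exp.1 hxy; linarith

lemma logCalibrator_mono {α : ℝ} (hα : 0 < α) :
    MonotoneOn (logCalibrator α) (Set.Icc (0 : ℝ) 1) := by
  intro x hx y hy hxy
  rw [logCalibrator_eq, logCalibrator_eq]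
  by_cases hyθ : y ≤ Real.exp (-(1 + α))
  · rw [if_pos hyθ, if_pos (hxy.trans hyθ)]
    exact ENNReal.ofReal_le_ofReal (Fc_mono hα hx.1 hxy hyθ)
  · rw [if_neg hyθ]; exact le_top

lemma hasDerivAt_H {α x : ℝ} (hα : 0 < α) (hx0 : 0 < x) (hx1 : x < 1) :
    HasDerivAt (fun y => (1+α)^α * (-Real.log y) ^ (-α)) ((Fc α x)⁻¹) x := by
  have hL : 0 < -Real.log x := neg_pos.2 (Real.log_neg hx0 hx1)
  have inner : HasDerivAt (fun y => -Real.log y) (-x⁻¹) x := (Real.hasDerivAt_log hx0.ne').neg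
  have outer : HasDerivAt (fun t : ℝ => t ^ (-α)) (-α * (-Real.log x) ^ (-α - 1)) (-Real.log x) :=
    Real.hasDerivAt_rpow_const (Or.inl hL.ne')
  have comp := (outer.comp x inner).const_mul ((1+α)^α)
  refine comp.congr_deriv (Eq.symm ?_)
  unfold Fc
  rw [one_div, Real.log_inv, show (-α - 1 : ℝ) = -(1+α) by ring, Real.rpow_neg hL.le,
    Real.rpow_neg (by linarith : (0:ℝ) ≤ 1+α)]
  have h1 : ((1:ℝ)+α)^α ≠ 0 := (Real.rpow_pos_of_pos (by linarith) _).ne'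
  have h2 : (-Real.log x) ^ (1+α) ≠ 0 := (Real.rpow_pos_of_pos hL _).ne'
  field_simp

lemma lintegral_piece {α : ℝ} (hα : 0 < α) {a : ℝ} (ha : 0 < a)
    (haθ : a ≤ Real.exp (-(1+α))) :
    ∫⁻ x in Set.Ioc a (Real.exp (-(1+α))), ENNReal.ofReal (Fc α x)⁻¹ =
      ENNReal.ofReal (1 - (1+α)^α * (-Real.log a)^(-α)) := by
  set θ := Real.exp (-(1+α)) with hθ
  have hθ1 : θ < 1 := theta_lt_one hα
  have hcontF : ContinuousOn (Fc α) (Set.Icc a θ) := by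
    apply ContinuousOn.mul
    · exact (continuousOn_const.mul continuousOn_id)
    · apply ContinuousOn.rpow_const
      · apply Real.continuousOn_log.comp (continuousOn_const.div continuousOn_id
          (fun x hx => (lt_of_lt_of_le ha hx.1).ne'))
        intro x hx
        have : 0 < x := lt_of_lt_of_le ha hx.1
        simp only [Set.mem_setOf_eq, Set.mem_compl_iff, Set.mem_singleton_iff]
        exact ne_of_gt (by positivity : (0:ℝ) < 1 / x)
      · intro x hx; exact Or.inr (by linarith)
  have hcont : ContinuousOn (fun x => (Fc α x)⁻¹) (Set.Icc a θ) :=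
    hcontF.inv₀ (fun x hx => (Fc_pos hα (lt_of_lt_of_le ha hx.1) hx.2).ne')
  have hInt : IntegrableOn (fun x => (Fc α x)⁻¹) (Set.Ioc a θ) volume :=
    (hcont.integrableOn_compact isCompact_Icc).mono_set Set.Ioc_subset_Icc_self
  have hftc : ∫ y in a..θ, (Fc α y)⁻¹ =
      ((1+α)^α * (-Real.log θ)^(-α)) - ((1+α)^α * (-Real.log a)^(-α)) := by
    apply intervalIntegral.integral_eq_sub_of_hasDerivAt
      (f := fun y => (1+α)^α * (-Real.log y)^(-α))
    · intro x hx
      rw [Set.uIcc_of_le haθ] at hx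
      exact hasDerivAt_H hα (lt_of_lt_of_le ha hx.1) (lt_of_le_of_lt hx.2 hθ1)
    · rw [intervalIntegrable_iff_integrableOn_Ioc_of_le haθ]; exact hInt
  have hlogθ : -Real.log θ = 1 + α := by rw [hθ, Real.log_exp]; ring
  have hone : ((1:ℝ)+α)^α * ((1+α):ℝ)^(-α) = 1 := by
    rw [← Real.rpow_add (by linarith)]; simp
  rw [← ofReal_integral_eq_lintegral_ofReal hInt
      ((ae_restrict_iff' measurableSet_Ioc).2 (Filter.Eventually.of_forall
        (fun x hx => inv_nonneg.2 (Fc_pos hα (ha.trans hx.1) hx.2).le)))]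
  congr 1
  rw [← intervalIntegral.integral_of_le haθ, hftc, hlogθ, hone]

lemma lintegral_inv_logCalibrator {α : ℝ} (hα : 0 < α) :
    ∫⁻ x in Set.Icc (0 : ℝ) 1, (logCalibrator α x)⁻¹ = 1 := by
  set θ := Real.exp (-(1+α)) with hθ
  have hθ1 : θ < 1 := theta_lt_one hα
  have hθ0 : 0 < θ := Real.exp_pos _
  set φ : ℝ → ℝ≥0∞ := fun x => (logCalibrator α x)⁻¹ with hφ
  have step1 : ∫⁻ x in Set.Icc (0:ℝ) 1, φ x = ∫⁻ x in Set.Ioc (0:ℝ) 1, φ x :=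
    (setLIntegral_congr Ioc_ae_eq_Icc).symm
  have hsplit : Set.Ioc (0:ℝ) θ ∪ Set.Ioc θ 1 = Set.Ioc (0:ℝ) 1 :=
    Set.Ioc_union_Ioc_eq_Ioc hθ0.le hθ1.le
  have step2 : ∫⁻ x in Set.Ioc (0:ℝ) 1, φ x
      = (∫⁻ x in Set.Ioc (0:ℝ) θ, φ x) + ∫⁻ x in Set.Ioc θ 1, φ x := by
    rw [← hsplit, lintegral_union measurableSet_Ioc (Set.Ioc_disjoint_Ioc_of_le le_rfl)]
  have step3 : ∫⁻ x in Set.Ioc θ 1, φ x = 0 := by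
    rw [setLIntegral_congr_fun measurableSet_Ioc
      (fun x hx => show φ x = 0 by
        simp only [hφ, logCalibrator_eq]
        rw [if_neg (by rw [← hθ]; exact not_le.2 hx.1), ENNReal.inv_top]), lintegral_zero]
  have step4 : ∫⁻ x in Set.Ioc (0:ℝ) θ, φ x
      = ∫⁻ x in Set.Ioc (0:ℝ) θ, ENNReal.ofReal (Fc α x)⁻¹ := by
    apply setLIntegral_congr_fun measurableSet_Ioc
    intro x hx
    simp only [hφ, logCalibrator_eq, if_pos hx.2, ← hθ]
    rw [← ENNReal.ofReal_inv_of_pos (Fc_pos hα hx.1 hx.2)]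
  -- the increasing family
  set a : ℕ → ℝ := fun n => Real.exp (-((n:ℝ)+1) * (1+α)) with ha
  have ha_pos : ∀ n, 0 < a n := fun n => Real.exp_pos _
  have ha_le : ∀ n, a n ≤ θ := by
    intro n
    apply Real.exp_le_exp.2
    have : (0:ℝ) ≤ (n:ℝ) := Nat.cast_nonneg n
    nlinarith
  have hUnion : ⋃ n, Set.Ioc (a n) θ = Set.Ioc (0:ℝ) θ := by
    ext x
    simp only [Set.mem_iUnion, Set.mem_Ioc]
    constructor
    · rintro ⟨n, hn1, hn2⟩; exact ⟨(ha_pos n).trans hn1, hn2⟩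
    · rintro ⟨hx0, hxθ⟩
      refine ⟨⌈-Real.log x⌉₊, ?_, hxθ⟩
      have h1 : -Real.log x ≤ (⌈-Real.log x⌉₊ : ℝ) := Nat.le_ceil _
      have h2 : -((⌈-Real.log x⌉₊:ℝ)+1) * (1+α) < Real.log x := by
        have : (0:ℝ) ≤ (⌈-Real.log x⌉₊:ℝ) := Nat.cast_nonneg _
        nlinarith
      calc a ⌈-Real.log x⌉₊ < Real.exp (Real.log x) := Real.exp_lt_exp.2 h2
        _ = x := Real.exp_log hx0
  have hdir : Directed (· ⊆ ·) (fun n => Set.Ioc (a n) θ) := by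
    apply Monotone.directed_le
    intro n m hnm
    apply Set.Ioc_subset_Ioc_left
    apply Real.exp_le_exp.2
    have : (n:ℝ) ≤ (m:ℝ) := Nat.cast_le.2 hnm
    nlinarith
  have hpiece : ∀ n, ∫⁻ x in Set.Ioc (a n) θ, ENNReal.ofReal (Fc α x)⁻¹
      = ENNReal.ofReal (1 - ((n:ℝ)+1)^(-α)) := by
    intro n
    rw [lintegral_piece hα (ha_pos n) (ha_le n)]
    congr 1
    have hlog : -Real.log (a n) = ((n:ℝ)+1) * (1+α) := by
      rw [ha]; simp [Real.log_exp]; ring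
    rw [hlog, Real.mul_rpow (by positivity) (by linarith)]
    have hone : ((1:ℝ)+α)^α * ((1:ℝ)+α)^(-α) = 1 := by
      rw [← Real.rpow_add (by linarith)]; simp
    linear_combination (-(((n:ℝ)+1)^(-α))) * hone
  have hsup : ∫⁻ x in Set.Ioc (0:ℝ) θ, ENNReal.ofReal (Fc α x)⁻¹ = 1 := by
    rw [← hUnion, setLIntegral_iUnion_of_directed _ hdir]
    simp only [hpiece]
    apply le_antisymm
    · apply iSup_le
      intro n
      apply ENNReal.ofReal_le_one.2
      have : (0:ℝ) ≤ ((n:ℝ)+1)^(-α) := Real.rpow_nonneg (by positivity) _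
      linarith
    · have htend : Filter.Tendsto (fun n : ℕ => ENNReal.ofReal (1 - ((n:ℝ)+1)^(-α)))
          Filter.atTop (nhds 1) := by
        have h1 : Filter.Tendsto (fun n : ℕ => ((n:ℝ)+1)^(-α)) Filter.atTop (nhds 0) :=
          (tendsto_rpow_neg_atTop hα).comp
            (Filter.tendsto_atTop_add_const_right _ 1 tendsto_natCast_atTop_atTop)
        have h2 : Filter.Tendsto (fun n : ℕ => 1 - ((n:ℝ)+1)^(-α)) Filter.atTop (nhds 1) := by
          simpa using (tendsto_const_nhds.sub h1)
        simpa [Function.comp_def] using (ENNReal.continuous_ofReal.tendsto 1).comp h2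
      exact le_of_tendsto htend (Filter.Eventually.of_forall (fun n => le_iSup (fun n : ℕ => ENNReal.ofReal (1 - ((n:ℝ)+1)^(-α))) n))
  rw [step1, step2, step3, step4, hsup, add_zero]

lemma measurable_logCalibrator {α : ℝ} (hα : 0 < α) : Measurable (logCalibrator α) := by
  unfold logCalibrator
  apply Measurable.ite
  · exact measurableSet_Iic (a := Real.exp (-(1 + α)))
  · apply ENNReal.measurable_ofReal.comp
    apply Measurable.mul
    · exact measurable_const.mul measurable_id
    · have h1 : Measurable fun x : ℝ => Real.log (1 / x) :=
        Real.measurable_log.comp (measurable_const.div measurable_id)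
      exact (Real.continuous_rpow_const (by linarith)).measurable.comp h1
  · exact measurable_const

lemma logCalibrator_ne_zero {α x : ℝ} (hα : 0 < α) (hx0 : 0 < x) : logCalibrator α x ≠ 0 := by
  rw [logCalibrator_eq]
  by_cases h : x ≤ Real.exp (-(1 + α))
  · rw [if_pos h]; exact (ENNReal.ofReal_pos.2 (Fc_pos hα hx0 h)).ne'
  · rw [if_neg h]; exact ENNReal.top_ne_zero

lemma logCalibrator_zero (α : ℝ) : logCalibrator α 0 = 0 := by
  rw [logCalibrator_eq, if_pos (theta_pos α).le]
  simp [Fc]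

lemma pTest_bound {α : ℝ} (hα : 0 < α) (Ω : Type) (m : MeasurableSpace Ω) (P : Measure Ω)
    (hP : IsProbabilityMeasure P) (p : Ω → ℝ) (hp : Measurable p)
    (hp01 : ∀ ω, p ω ∈ Set.Icc (0:ℝ) 1)
    (hptest : ∀ δ ∈ Set.Icc (0:ℝ) 1, P {ω | p ω ≤ δ} ≤ ENNReal.ofReal δ) :
    ∫⁻ ω, (logCalibrator α (p ω))⁻¹ ∂P ≤ 1 := by
  set φ : ℝ → ℝ≥0∞ := fun x => (logCalibrator α x)⁻¹ with hφdef
  have hφm : Measurable φ := (measurable_logCalibrator hα).inv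
  have hφ_ne : ∀ x : ℝ, 0 < x → φ x ≠ ∞ :=
    fun x hx => ENNReal.inv_ne_top.2 (logCalibrator_ne_zero hα hx)
  -- a.e. p ω > 0
  have hP0 : P {ω | p ω = 0} = 0 := by
    apply le_antisymm _ (zero_le)
    calc P {ω | p ω = 0} ≤ P {ω | p ω ≤ 0} := measure_mono (fun ω h => le_of_eq h)
      _ ≤ ENNReal.ofReal 0 := hptest 0 ⟨le_refl _, zero_le_one⟩
      _ = 0 := ENNReal.ofReal_zero
  have hae : ∀ᵐ ω ∂P, ENNReal.ofReal ((φ (p ω)).toReal) = φ (p ω) := by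
    rw [ae_iff]
    apply measure_mono_null _ hP0
    intro ω hω
    simp only [Set.mem_setOf_eq] at hω ⊢
    by_contra h
    exact hω (ENNReal.ofReal_toReal (hφ_ne _ (lt_of_le_of_ne (hp01 ω).1 (Ne.symm h))))
  -- a.e. x ≠ 0 on the restricted volume
  have haeV : ∀ᵐ x ∂(volume.restrict (Set.Icc (0:ℝ) 1)), ENNReal.ofReal ((φ x).toReal) = φ x := by
    have hnull : (volume.restrict (Set.Icc (0:ℝ) 1)) ({0} ∪ Set.Iio (0:ℝ)) = 0 := by
      rw [Measure.restrict_apply ((measurableSet_singleton 0).union measurableSet_Iio)]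
      apply measure_mono_null (?_ : _ ⊆ ({(0:ℝ)} : Set ℝ)) (measure_singleton 0)
      rintro x ⟨hx1, hx2⟩
      rcases hx1 with h | h
      · exact h
      · exact absurd hx2.1 (not_le.2 h)
    rw [ae_iff]
    apply measure_mono_null _ hnull
    intro x hx
    simp only [Set.mem_setOf_eq] at hx
    by_contra h
    simp only [Set.mem_union, Set.mem_singleton_iff, Set.mem_Iio, not_or, not_lt] at h
    exact hx (ENNReal.ofReal_toReal (hφ_ne _ (lt_of_le_of_ne h.2 (Ne.symm h.1))))
  -- key comparison
  have hcmp : ∀ t : ℝ, 0 < t →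
      P {ω | t < (φ (p ω)).toReal} ≤
        (volume.restrict (Set.Icc (0:ℝ) 1)) {x | t < (φ x).toReal} := by
    intro t ht
    rw [Measure.restrict_apply (measurableSet_lt measurable_const hφm.ennreal_toReal)]
    set S := {x | t < (φ x).toReal} ∩ Set.Icc (0:ℝ) 1 with hSdef
    have hmem : ∀ ω, t < (φ (p ω)).toReal → p ω ∈ S := fun ω h => ⟨h, hp01 ω⟩
    rcases S.eq_empty_or_nonempty with hS | hS
    · have hempty : {ω | t < (φ (p ω)).toReal} = ∅ := by
        ext ω
        simp only [Set.mem_setOf_eq, Set.mem_empty_iff_false, iff_false]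
        intro h
        exact (hS ▸ hmem ω h : p ω ∈ (∅ : Set ℝ))
      rw [hempty]; simp
    · set s := sSup S with hs
      have hbdd : BddAbove S := BddAbove.mono Set.inter_subset_right bddAbove_Icc
      obtain ⟨y, hy⟩ := hS
      have hy0 : 0 < y := by
        rcases lt_or_eq_of_le hy.2.1 with h | h
        · exact h
        · exfalso
          have h1 := hy.1
          rw [← h] at h1
          simp only [Set.mem_setOf_eq, hφdef, logCalibrator_zero, ENNReal.inv_zero,
            ENNReal.toReal_top] at h1
          linarith
      have hys : y ≤ s := le_csSup hbdd hy
      have hs1 : s ≤ 1 := csSup_le ⟨y, hy⟩ (fun z hz => hz.2.2)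
      have hs0 : 0 < s := lt_of_lt_of_le hy0 hys
      have hdown : Set.Ioo (0:ℝ) s ⊆ S := by
        intro z hz
        obtain ⟨w, hw, hzw⟩ := exists_lt_of_lt_csSup ⟨y, hy⟩ hz.2
        have hw0 : 0 < w := lt_trans hz.1 hzw
        have h1 : ENNReal.ofReal t < φ w :=
          (ENNReal.ofReal_lt_iff_lt_toReal ht.le (hφ_ne w hw0)).2 hw.1
        have hzIcc : z ∈ Set.Icc (0:ℝ) 1 := ⟨hz.1.le, hzw.le.trans hw.2.2⟩
        have hmono : φ w ≤ φ z := by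
          apply ENNReal.inv_le_inv.2
          exact logCalibrator_mono hα hzIcc hw.2 hzw.le
        refine ⟨?_, hzIcc⟩
        show t < (φ z).toReal
        exact (ENNReal.ofReal_lt_iff_lt_toReal ht.le (hφ_ne z hz.1)).1 (lt_of_lt_of_le h1 hmono)
      calc P {ω | t < (φ (p ω)).toReal} ≤ P {ω | p ω ≤ s} :=
          measure_mono (fun ω h => le_csSup hbdd (hmem ω h))
        _ ≤ ENNReal.ofReal s := hptest s ⟨hs0.le, hs1⟩
        _ = volume (Set.Ioo (0:ℝ) s) := by rw [Real.volume_Ioo, sub_zero]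
        _ ≤ volume S := measure_mono hdown
  calc ∫⁻ ω, φ (p ω) ∂P
      = ∫⁻ ω, ENNReal.ofReal ((φ (p ω)).toReal) ∂P := (lintegral_congr_ae hae).symm
    _ = ∫⁻ t in Set.Ioi 0, P {ω | t < (φ (p ω)).toReal} :=
        lintegral_eq_lintegral_meas_lt P
          (Filter.Eventually.of_forall fun ω => ENNReal.toReal_nonneg)
          ((ENNReal.measurable_toReal.comp (hφm.comp hp)).aemeasurable)
    _ ≤ ∫⁻ t in Set.Ioi 0, (volume.restrict (Set.Icc (0:ℝ) 1)) {x | t < (φ x).toReal} :=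
        lintegral_mono_ae ((ae_restrict_iff' measurableSet_Ioi).2
          (Filter.Eventually.of_forall fun t ht => hcmp t ht))
    _ = ∫⁻ x in Set.Icc (0:ℝ) 1, ENNReal.ofReal ((φ x).toReal) :=
        (lintegral_eq_lintegral_meas_lt _
          (Filter.Eventually.of_forall fun x => ENNReal.toReal_nonneg)
          (ENNReal.measurable_toReal.comp hφm).aemeasurable).symm
    _ = ∫⁻ x in Set.Icc (0:ℝ) 1, φ x := lintegral_congr_ae haeV
    _ = 1 := lintegral_inv_logCalibrator hα

lemma no_dominator {α : ℝ} (hα : 0 < α) :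
    ¬ ∃ g : ℝ → ℝ≥0∞,
        MonotoneOn g (Set.Icc (0 : ℝ) 1) ∧
        (∫⁻ x in Set.Icc (0 : ℝ) 1, (g x)⁻¹ ≤ 1) ∧
        (∀ x ∈ Set.Icc (0 : ℝ) 1, g x ≤ logCalibrator α x) ∧
        (∃ x ∈ Set.Icc (0 : ℝ) 1, g x < logCalibrator α x) := by
  rintro ⟨g, hgmono, hgint, hgle, x₀, hx₀, hlt⟩
  set θ := Real.exp (-(1+α)) with hθ
  have hθ0 : 0 < θ := Real.exp_pos _
  have hθ1 : θ < 1 := theta_lt_one hα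
  -- produce an interval with a definite gap
  obtain ⟨x₁, c₁, c₂, hx₁0, hx₁lt, hcc, hfb, hgb⟩ :
      ∃ (x₁ : ℝ) (c₁ c₂ : ℝ≥0∞), 0 ≤ x₁ ∧ x₁ < x₀ ∧ c₁ < c₂ ∧
        (∀ x ∈ Set.Ioc x₁ x₀, (logCalibrator α x)⁻¹ ≤ c₁) ∧
        (∀ x ∈ Set.Ioc x₁ x₀, c₂ ≤ (g x)⁻¹) := by
    by_cases hθx : x₀ ≤ θ
    · -- continuity case
      have hfx₀ : logCalibrator α x₀ = ENNReal.ofReal (Fc α x₀) := by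
        rw [logCalibrator_eq, if_pos (by rw [← hθ]; exact hθx)]
      have hgne : g x₀ ≠ ∞ := by
        rw [hfx₀] at hlt
        exact hlt.ne_top
      have hx₀0 : 0 < x₀ := by
        rcases lt_or_eq_of_le hx₀.1 with h | h
        · exact h
        · exfalso
          rw [← h, logCalibrator_zero] at hlt
          exact absurd hlt (by simp)
      have hr : (g x₀).toReal < Fc α x₀ := by
        rw [hfx₀] at hlt
        exact (ENNReal.lt_ofReal_iff_toReal_lt hgne).1 hlt
      have hcont : ContinuousAt (Fc α) x₀ := by
        unfold Fc
        apply ContinuousAt.mul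
        · exact continuousAt_const.mul continuousAt_id
        · apply ContinuousAt.rpow_const
          · exact (Real.continuousAt_log (by positivity)).comp
              (continuousAt_const.div continuousAt_id hx₀0.ne')
          · exact Or.inr (by linarith)
      have hev : ∀ᶠ x in nhdsWithin x₀ (Set.Iio x₀), (g x₀).toReal < Fc α x :=
        (hcont.eventually (eventually_gt_nhds hr)).filter_mono nhdsWithin_le_nhds
      have hev2 : ∀ᶠ x in nhdsWithin x₀ (Set.Iio x₀), x ∈ Set.Ioo 0 x₀ :=
        Filter.eventually_of_mem (Ioo_mem_nhdsLT hx₀0) (fun x hx => hx)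
      obtain ⟨x₁, hx₁F, hx₁mem⟩ := (hev.and hev2).exists
      refine ⟨x₁, (ENNReal.ofReal (Fc α x₁))⁻¹, (g x₀)⁻¹, hx₁mem.1.le, hx₁mem.2, ?_, ?_, ?_⟩
      · exact ENNReal.inv_lt_inv.2 ((ENNReal.lt_ofReal_iff_toReal_lt hgne).2 hx₁F)
      · intro x hx
        have hxθ : x ≤ θ := hx.2.trans hθx
        rw [logCalibrator_eq, if_pos (by rw [← hθ]; exact hxθ)]
        apply ENNReal.inv_le_inv.2
        exact ENNReal.ofReal_le_ofReal (Fc_mono hα hx₁mem.1.le hx.1.le hxθ)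
      · intro x hx
        apply ENNReal.inv_le_inv.2
        exact hgmono ⟨hx₁mem.1.le.trans hx.1.le, hx.2.trans hx₀.2⟩ hx₀ hx.2
    · -- x₀ > θ
      push_neg at hθx
      have hfx₀ : logCalibrator α x₀ = ∞ := by
        rw [logCalibrator_eq, if_neg (by rw [← hθ]; exact not_le.2 hθx)]
      have hgne : g x₀ ≠ ∞ := (hfx₀ ▸ hlt).ne_top
      refine ⟨θ, 0, (g x₀)⁻¹, hθ0.le, hθx, ENNReal.inv_pos.2 hgne, ?_, ?_⟩
      · intro x hx
        rw [logCalibrator_eq, if_neg (by rw [← hθ]; exact not_le.2 hx.1)]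
        simp
      · intro x hx
        apply ENNReal.inv_le_inv.2
        exact hgmono ⟨hθ0.le.trans hx.1.le, hx.2.trans hx₀.2⟩ hx₀ hx.2
  -- derive contradiction
  set I := Set.Ioc x₁ x₀ with hI
  have hIsub : I ⊆ Set.Icc (0:ℝ) 1 := fun x hx => ⟨hx₁0.trans hx.1.le, hx.2.trans hx₀.2⟩
  have hIm : MeasurableSet I := measurableSet_Ioc
  have hsplitset : (Set.Icc (0:ℝ) 1 \ I) ∪ I = Set.Icc (0:ℝ) 1 := Set.diff_union_of_subset hIsub
  have hμI : volume I = ENNReal.ofReal (x₀ - x₁) := Real.volume_Ioc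
  have hsplitf : ∀ h : ℝ → ℝ≥0∞, ∫⁻ x in Set.Icc (0:ℝ) 1, h x
      = (∫⁻ x in Set.Icc (0:ℝ) 1 \ I, h x) + ∫⁻ x in I, h x := fun h => by
    conv_lhs => rw [← hsplitset]
    exact lintegral_union hIm disjoint_sdiff_self_left
  have hAle : ∫⁻ x in Set.Icc (0:ℝ) 1 \ I, (logCalibrator α x)⁻¹
      ≤ ∫⁻ x in Set.Icc (0:ℝ) 1 \ I, (g x)⁻¹ :=
    lintegral_mono_ae ((ae_restrict_iff' (measurableSet_Icc.diff hIm)).2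
      (Filter.Eventually.of_forall fun x hx => ENNReal.inv_le_inv.2 (hgle x hx.1)))
  have hIf : ∫⁻ x in I, (logCalibrator α x)⁻¹ ≤ c₁ * volume I :=
    calc ∫⁻ x in I, (logCalibrator α x)⁻¹ ≤ ∫⁻ _ in I, c₁ :=
        lintegral_mono_ae ((ae_restrict_iff' hIm).2 (Filter.Eventually.of_forall hfb))
      _ = c₁ * volume I := setLIntegral_const I c₁
  have hIg : c₂ * volume I ≤ ∫⁻ x in I, (g x)⁻¹ :=
    calc c₂ * volume I = ∫⁻ _ in I, c₂ := (setLIntegral_const I c₂).symm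
      _ ≤ _ := lintegral_mono_ae ((ae_restrict_iff' hIm).2 (Filter.Eventually.of_forall hgb))
  have hAfin : ∫⁻ x in Set.Icc (0:ℝ) 1 \ I, (g x)⁻¹ ≠ ∞ := by
    apply ne_top_of_le_ne_top (show (1:ℝ≥0∞) ≠ ⊤ by simp)
    calc ∫⁻ x in Set.Icc (0:ℝ) 1 \ I, (g x)⁻¹ ≤ ∫⁻ x in Set.Icc (0:ℝ) 1, (g x)⁻¹ :=
        lintegral_mono' (Measure.restrict_mono Set.diff_subset le_rfl) le_rfl
      _ ≤ 1 := hgint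
  have key1 : (1:ℝ≥0∞) ≤ (∫⁻ x in Set.Icc (0:ℝ) 1 \ I, (g x)⁻¹) + c₁ * volume I := by
    rw [← lintegral_inv_logCalibrator hα, hsplitf (fun x => (logCalibrator α x)⁻¹)]
    exact add_le_add hAle hIf
  have key2 : (∫⁻ x in Set.Icc (0:ℝ) 1 \ I, (g x)⁻¹) + c₂ * volume I ≤ 1 :=
    calc _ ≤ (∫⁻ x in Set.Icc (0:ℝ) 1 \ I, (g x)⁻¹) + ∫⁻ x in I, (g x)⁻¹ :=
        add_le_add le_rfl hIg
      _ = ∫⁻ x in Set.Icc (0:ℝ) 1, (g x)⁻¹ := (hsplitf _).symm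
      _ ≤ 1 := hgint
  have hcancel : c₂ * volume I ≤ c₁ * volume I :=
    (ENNReal.add_le_add_iff_left hAfin).1 (key2.trans key1)
  have hlt2 : c₁ * volume I < c₂ * volume I := by
    rw [hμI]
    exact (ENNReal.mul_lt_mul_iff_left (ENNReal.ofReal_pos.2 (by linarith)).ne'
      ENNReal.ofReal_ne_top).2 hcc
  exact absurd hcancel (not_le.2 hlt2)

/-- For every `α > 0`, `logCalibrator α` is an admissible calibrator:
it is increasing on `[0,1]`, no calibrator strictly dominates it, for every probability
space and every p-test `p` on it `∫ (1/f(p)) dP ≤ 1`, and `∫₀¹ (1/f(x)) dx = 1`. -/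
theorem logCalibrator_is_admissible_calibrator (α : ℝ) (hα : 0 < α) :
    MonotoneOn (logCalibrator α) (Set.Icc (0 : ℝ) 1) ∧
    (¬ ∃ g : ℝ → ℝ≥0∞,
        MonotoneOn g (Set.Icc (0 : ℝ) 1) ∧
        (∫⁻ x in Set.Icc (0 : ℝ) 1, (g x)⁻¹ ≤ 1) ∧
        (∀ x ∈ Set.Icc (0 : ℝ) 1, g x ≤ logCalibrator α x) ∧
        (∃ x ∈ Set.Icc (0 : ℝ) 1, g x < logCalibrator α x)) ∧
    (∀ (Ω : Type) (m : MeasurableSpace Ω) (P : Measure Ω),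
      IsProbabilityMeasure P →
      ∀ p : Ω → ℝ, Measurable p → (∀ ω, p ω ∈ Set.Icc (0 : ℝ) 1) →
      (∀ δ ∈ Set.Icc (0 : ℝ) 1, P {ω | p ω ≤ δ} ≤ ENNReal.ofReal δ) →
      ∫⁻ ω, (logCalibrator α (p ω))⁻¹ ∂P ≤ 1) ∧
    ∫⁻ x in Set.Icc (0 : ℝ) 1, (logCalibrator α x)⁻¹ = 1 := by
  refine ⟨logCalibrator_mono hα, no_dominator hα, ?_, lintegral_inv_logCalibrator hα⟩
  intro Ω m P hP p hp hp01 hptest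
  exact pTest_bound hα Ω m P hP p hp hp01 hptest
end

section
/- Let f : [1,∞) → [0,∞) be an increasing function with ∫₀¹ f(1/x) dx ≤ 1, and let (X_n, F_n)_{n∈ℕ} be a test supermartingale on a probability space (Ω, F, P). Then E[f(X*_∞)] ≤ 1, where X*_∞ := sup_{n∈ℕ} max(X_n, 1). -/
open MeasureTheory ENNReal

open Filter Topology

/-- Ville's inequality for nonnegative supermartingales. -/
lemma ville_aux {Ω : Type*} {m : MeasurableSpace Ω} {P : Measure Ω} [IsProbabilityMeasure P]
    {ℱ : Filtration ℕ m} {X : ℕ → Ω → ℝ}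
    (hX : Supermartingale X ℱ P) (hpos : ∀ n, 0 ≤ᵐ[P] X n)
    (h0 : ∫ ω, X 0 ω ∂P ≤ 1) {ε : ℝ} (hε : 0 < ε) :
    P {ω | ∃ n, ε ≤ X n ω} ≤ ENNReal.ofReal ε⁻¹ := by
  have hXm : ∀ n, Measurable (X n) := fun n =>
    ((hX.stronglyAdapted n).measurable).le (ℱ.le n)
  set τ : ℕ → Ω → WithTop ℕ := fun n ω => (hittingBtwn X (Set.Ici ε) 0 n ω : ℕ) with hτdef
  have hτ : ∀ n, IsStoppingTime ℱ (τ n) := fun n =>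
    Adapted.isStoppingTime_hittingBtwn hX.stronglyAdapted.adapted measurableSet_Ici
  have hτle : ∀ n ω, τ n ω ≤ n := fun n ω => WithTop.coe_le_coe.2 (hittingBtwn_le ω)
  have integ : ∀ n, Integrable (stoppedValue X (τ n)) P := fun n =>
    integrable_stoppedValue ℕ (hτ n) hX.integrable (hτle n)
  have hsvnn : ∀ n, 0 ≤ᵐ[P] stoppedValue X (τ n) := by
    intro n
    filter_upwards [ae_all_iff.2 hpos] with ω hω
    exact hω (τ n ω).untopA
  have hsvle : ∀ n, ∫ ω, stoppedValue X (τ n) ω ∂P ≤ 1 := by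
    intro n
    have key := (hX.neg).expected_stoppedValue_mono
      (isStoppingTime_const ℱ 0) (hτ n) (fun ω => WithTop.coe_le_coe.2 (Nat.zero_le _)) (hτle n)
    simp only [stoppedValue, Pi.neg_apply, integral_neg, neg_le_neg_iff] at key
    exact le_trans key h0
  set A : ℕ → Set Ω := fun n => {ω | ∃ k ≤ n, ε ≤ X k ω} with hAdef
  have hA : ∀ n, ENNReal.ofReal ε * P (A n) ≤ 1 := by
    intro n
    have hsub : A n ⊆ {ω | ENNReal.ofReal ε ≤ ENNReal.ofReal (stoppedValue X (τ n) ω)} := by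
      rintro ω ⟨k, hk, hε'⟩
      have : stoppedValue X (τ n) ω ∈ Set.Ici ε :=
        stoppedValue_hittingBtwn_mem ⟨k, ⟨Nat.zero_le _, hk⟩, hε'⟩
      exact ENNReal.ofReal_le_ofReal this
    have haem : AEMeasurable (fun ω => ENNReal.ofReal (stoppedValue X (τ n) ω)) P :=
      ENNReal.measurable_ofReal.comp_aemeasurable (integ n).aemeasurable
    calc ENNReal.ofReal ε * P (A n)
        ≤ ENNReal.ofReal ε *
            P {ω | ENNReal.ofReal ε ≤ ENNReal.ofReal (stoppedValue X (τ n) ω)} := by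
          exact mul_le_mul_right (measure_mono hsub) _
      _ ≤ ∫⁻ ω, ENNReal.ofReal (stoppedValue X (τ n) ω) ∂P :=
          mul_meas_ge_le_lintegral₀ haem _
      _ = ENNReal.ofReal (∫ ω, stoppedValue X (τ n) ω ∂P) :=
          (ofReal_integral_eq_lintegral_ofReal (integ n) (hsvnn n)).symm
      _ ≤ 1 := by
          rw [← ENNReal.ofReal_one]
          exact ENNReal.ofReal_le_ofReal (hsvle n)
  have hAmono : Monotone A := by
    intro a b hab ω hω
    obtain ⟨k, hk, h⟩ := hω
    exact ⟨k, hk.trans hab, h⟩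
  have hAmeas : ∀ n, MeasurableSet (A n) := by
    intro n
    have : A n = ⋃ k, ⋃ _ : k ≤ n, {ω | ε ≤ X k ω} := by
      ext ω; simp [hAdef]
    rw [this]
    exact MeasurableSet.iUnion fun k => MeasurableSet.iUnion fun _ =>
      measurableSet_le measurable_const (hXm k)
  have hU : {ω | ∃ n, ε ≤ X n ω} = ⋃ n, A n := by
    ext ω
    constructor
    · rintro ⟨n, hn⟩; exact Set.mem_iUnion.2 ⟨n, n, le_rfl, hn⟩
    · intro h
      obtain ⟨n, k, _, hk⟩ := Set.mem_iUnion.1 h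
      exact ⟨k, hk⟩
  have hmul : ENNReal.ofReal ε * P {ω | ∃ n, ε ≤ X n ω} ≤ 1 := by
    rw [hU, Directed.measure_iUnion (hAmono.directed_le), ENNReal.mul_iSup]
    exact iSup_le hA
  rw [ENNReal.ofReal_inv_of_pos hε]
  rw [ENNReal.le_inv_iff_mul_le, mul_comm]
  exact hmul

/-- If `f : [1,∞) → [0,∞)` is increasing with `∫₀¹ f(1/x) dx ≤ 1`
and `(X_n, ℱ_n)` is a test supermartingale, then `E[f(X*_∞)] ≤ 1`, where
`X*_∞ := sup_n max(X_n, 1)`. -/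
theorem martingale_calibrator_bounds_sup_expectation
    (f : ℝ → ℝ)
    (hmono : MonotoneOn f (Set.Ici (1 : ℝ)))
    (hnonneg : ∀ x ∈ Set.Ici (1 : ℝ), 0 ≤ f x)
    (hint : ∫⁻ x in Set.Ioc (0 : ℝ) 1, ENNReal.ofReal (f x⁻¹) ≤ 1)
    {Ω : Type*} {m : MeasurableSpace Ω} {P : Measure Ω} [IsProbabilityMeasure P]
    {ℱ : Filtration ℕ m} {X : ℕ → Ω → ℝ}
    (hX : Supermartingale X ℱ P)
    (hpos : ∀ n, 0 ≤ᵐ[P] X n)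
    (h0 : ∫ ω, X 0 ω ∂P ≤ 1) :
    ∫⁻ ω, ENNReal.ofReal (f (⨆ n, max (X n ω) 1)) ∂P ≤ 1 := by
  have hXm : ∀ n, Measurable (X n) := fun n => ((hX.stronglyAdapted n).measurable).le (ℱ.le n)
  set Y : Ω → ℝ := fun ω => ⨆ n, max (X n ω) 1 with hYdef
  have hYmeas : Measurable Y :=
    Measurable.iSup (fun n => (hXm n).max measurable_const)
  -- the monotone extension of `f`
  set g : ℝ → ℝ := fun x => f (max x 1) with hgdef
  have hgmono : Monotone g := by
    intro x y hxy
    exact hmono (le_max_right x 1) (le_max_right y 1)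
      (max_le_max hxy le_rfl)
  have hgm : Measurable g := hgmono.measurable
  have hgnn : ∀ x, 0 ≤ g x := fun x => hnonneg _ (le_max_right x 1)
  -- the bad set of unbounded paths is null
  have hBnull : P {ω | ¬ BddAbove (Set.range fun n => X n ω)} = 0 := by
    by_contra hne
    obtain ⟨n, hn⟩ := ENNReal.exists_inv_nat_lt hne
    have hsub : {ω | ¬ BddAbove (Set.range fun n => X n ω)} ⊆
        {ω | ∃ k, ((n : ℝ) + 1) ≤ X k ω} := by
      intro ω hω
      obtain ⟨y, ⟨k, rfl⟩, hy⟩ := (not_bddAbove_iff.1 hω) ((n : ℝ) + 1)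
      exact ⟨k, hy.le⟩
    have h1 := (measure_mono hsub).trans
      (ville_aux hX hpos h0 (by positivity : (0:ℝ) < (n : ℝ) + 1))
    have h2 : ENNReal.ofReal ((n : ℝ) + 1)⁻¹ ≤ ((n : ℕ) : ℝ≥0∞)⁻¹ := by
      rw [ENNReal.ofReal_inv_of_pos (by positivity)]
      refine ENNReal.inv_le_inv' ?_
      rw [← ENNReal.ofReal_natCast n]
      exact ENNReal.ofReal_le_ofReal (by linarith)
    exact absurd (h1.trans h2) (not_le.2 hn)
  -- tail bound for Y
  have hYc : ∀ c : ℝ, 1 < c → P {ω | c ≤ Y ω} ≤ ENNReal.ofReal c⁻¹ := by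
    intro c hc
    have hc0 : (0:ℝ) < c := by linarith
    set e : ℕ → ℝ := fun k => c - (c - 1) / (k + 1) with hedef
    have he1 : ∀ k, 1 ≤ e k := by
      intro k
      have hk : (1:ℝ) ≤ (k:ℝ) + 1 := by
        have := Nat.cast_nonneg (α := ℝ) k
        linarith
      have : (c - 1) / ((k:ℝ) + 1) ≤ c - 1 := div_le_self (by linarith) hk
      simp only [hedef]; linarith
    have helt : ∀ k, e k < c := by
      intro k
      have hk : (0:ℝ) < (k:ℝ) + 1 := by
        have := Nat.cast_nonneg (α := ℝ) k
        linarith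
      have : 0 < (c - 1) / ((k:ℝ) + 1) := div_pos (by linarith) hk
      simp only [hedef]; linarith
    have hsubk : ∀ k, {ω | c ≤ Y ω} ⊆ {ω | ∃ n, e k ≤ X n ω} := by
      intro k ω hω
      have hωY : c ≤ Y ω := hω
      have hb : BddAbove (Set.range fun n => max (X n ω) 1) := by
        by_contra hnb
        have h0' : Y ω = 0 := Real.iSup_of_not_bddAbove hnb
        rw [h0'] at hωY
        linarith
      have hlt : e k < ⨆ n, max (X n ω) 1 := lt_of_lt_of_le (helt k) hωY
      obtain ⟨n, hn⟩ := (lt_ciSup_iff hb).1 hlt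
      refine ⟨n, ?_⟩
      rcases le_or_gt (X n ω) 1 with h | h
      · rw [max_eq_right h] at hn; linarith [he1 k]
      · rw [max_eq_left h.le] at hn; exact hn.le
    have hbound : ∀ k, P {ω | c ≤ Y ω} ≤ ENNReal.ofReal (e k)⁻¹ := fun k =>
      (measure_mono (hsubk k)).trans
        (ville_aux hX hpos h0 (lt_of_lt_of_le one_pos (he1 k)))
    have ht1 : Tendsto e atTop (𝓝 c) := by
      have h' : Tendsto (fun k : ℕ => (c-1) * (1 / ((k:ℝ)+1))) atTop (𝓝 ((c-1)*0)) :=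
        tendsto_const_nhds.mul tendsto_one_div_add_atTop_nhds_zero_nat
      have he : e = fun k : ℕ => c - (c-1) * (1/((k:ℝ)+1)) := by
        funext k; rw [hedef]; ring
      rw [he]
      simpa using tendsto_const_nhds.sub h'
    have ht2 : Tendsto (fun k => ENNReal.ofReal (e k)⁻¹) atTop (𝓝 (ENNReal.ofReal c⁻¹)) :=
      (ENNReal.continuous_ofReal.tendsto _).comp (ht1.inv₀ hc0.ne')
    exact ge_of_tendsto' ht2 hbound
  -- replace f by its monotone extension a.e.
  have hae : ∀ᵐ ω ∂P, ENNReal.ofReal (f (⨆ n, max (X n ω) 1)) = ENNReal.ofReal (g (Y ω)) := by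
    have hbdd : ∀ᵐ ω ∂P, BddAbove (Set.range fun n => X n ω) := ae_iff.2 hBnull
    filter_upwards [hbdd] with ω hω
    have hb : BddAbove (Set.range fun n => max (X n ω) 1) := by
      obtain ⟨M, hM⟩ := hω
      refine ⟨max M 1, ?_⟩
      rintro y ⟨n, rfl⟩
      exact max_le_max (hM ⟨n, rfl⟩) le_rfl
    have h1Y : 1 ≤ Y ω := le_trans (le_max_right (X 0 ω) 1) (le_ciSup hb 0)
    have : g (Y ω) = f (Y ω) := by rw [hgdef]; simp only []; rw [max_eq_left h1Y]
    rw [this]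
  rw [lintegral_congr_ae hae]
  have hGm : Measurable fun ω => g (Y ω) := hgm.comp hYmeas
  have hGnn : 0 ≤ᵐ[P] fun ω => g (Y ω) := ae_of_all _ fun ω => hgnn _
  rw [lintegral_eq_lintegral_meas_lt P hGnn hGm.aemeasurable]
  set q : ℝ → ℝ := fun x => g x⁻¹ with hqdef
  have hqm : Measurable q := hgm.comp measurable_inv
  have hqRHS : ∫⁻ x in Set.Ioc (0:ℝ) 1, ENNReal.ofReal (q x) ≤ 1 := by
    refine le_trans (le_of_eq ?_) hint
    refine setLIntegral_congr_fun measurableSet_Ioc (fun x hx => ?_)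
    have h1 : 1 ≤ x⁻¹ := (one_le_inv₀ hx.1).2 hx.2
    have : q x = f x⁻¹ := by rw [hqdef, hgdef]; simp only []; rw [max_eq_left h1]
    rw [this]
  have hlayer2 : ∫⁻ x in Set.Ioc (0:ℝ) 1, ENNReal.ofReal (q x)
      = ∫⁻ t in Set.Ioi (0:ℝ), (volume.restrict (Set.Ioc (0:ℝ) 1)) {x | t < q x} :=
    lintegral_eq_lintegral_meas_lt _ (ae_of_all _ fun x => hgnn _) hqm.aemeasurable
  -- pointwise comparison of tails
  have hpt : ∀ t : ℝ, t ∈ Set.Ioi (0:ℝ) →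
      P {a | t < g (Y a)} ≤ (volume.restrict (Set.Ioc (0:ℝ) 1)) {x | t < q x} := by
    intro t ht
    set S : Set ℝ := {x | 1 ≤ x ∧ t < f x} with hSdef
    have hup : ∀ x ∈ S, ∀ y : ℝ, x ≤ y → y ∈ S := by
      rintro x ⟨hx1, hxt⟩ y hxy
      exact ⟨hx1.trans hxy, hxt.trans_le (hmono hx1 (hx1.trans hxy) hxy)⟩
    rcases Set.eq_empty_or_nonempty S with hS | hS
    · have hempty : {a | t < g (Y a)} = ∅ := by
        ext ω
        simp only [Set.mem_setOf_eq, Set.mem_empty_iff_false, iff_false, not_lt]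
        by_contra hlt
        push_neg at hlt
        have hmem : max (Y ω) 1 ∈ S := ⟨le_max_right _ _, hlt⟩
        rw [hS] at hmem
        exact hmem
      rw [hempty]
      simp
    · set c := sInf S with hcdef
      have hbddS : BddBelow S := ⟨1, fun x hx => hx.1⟩
      have hc1 : 1 ≤ c := le_csInf hS fun x hx => hx.1
      have hc0 : (0:ℝ) < c := lt_of_lt_of_le one_pos hc1
      have hcinv1 : c⁻¹ ≤ 1 := inv_le_one_of_one_le₀ hc1
      have hev : {a | t < g (Y a)} ⊆ {ω | c ≤ max (Y ω) 1} := by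
        intro ω hω
        exact csInf_le hbddS ⟨le_max_right _ _, hω⟩
      have hLHS : P {a | t < g (Y a)} ≤ ENNReal.ofReal c⁻¹ := by
        rcases eq_or_lt_of_le hc1 with hceq | hclt
        · calc P {a | t < g (Y a)} ≤ 1 := prob_le_one
            _ = ENNReal.ofReal c⁻¹ := by rw [← hceq]; norm_num
        · refine (measure_mono hev).trans ?_
          refine le_trans (measure_mono ?_) (hYc c hclt)
          intro ω hω
          have hω' : c ≤ max (Y ω) 1 := hω
          show c ≤ Y ω
          rcases le_or_gt (Y ω) 1 with h | h
          · rw [max_eq_right h] at hω'; linarith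
          · rwa [max_eq_left h.le] at hω'
      have hRHS : ENNReal.ofReal c⁻¹ ≤ (volume.restrict (Set.Ioc (0:ℝ) 1)) {x | t < q x} := by
        have hsub : Set.Ioo (0:ℝ) c⁻¹ ⊆ {x | t < q x} := by
          intro x hx
          have hxinv : c < x⁻¹ := by
            have h' := inv_strictAnti₀ hx.1 hx.2
            rwa [inv_inv] at h'
          have hmem : x⁻¹ ∈ S := by
            obtain ⟨s, hsS, hs⟩ := exists_lt_of_csInf_lt hS hxinv
            exact hup s hsS _ hs.le
          have hqx : q x = f x⁻¹ := by
            rw [hqdef, hgdef]; simp only []; rw [max_eq_left hmem.1]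
          show t < q x
          rw [hqx]; exact hmem.2
        calc ENNReal.ofReal c⁻¹ = volume (Set.Ioo (0:ℝ) c⁻¹) := by
              rw [Real.volume_Ioo, sub_zero]
          _ = (volume.restrict (Set.Ioc (0:ℝ) 1)) (Set.Ioo (0:ℝ) c⁻¹) := by
              rw [Measure.restrict_apply measurableSet_Ioo]
              congr 1
              refine (Set.inter_eq_left.2 ?_).symm
              intro x hx
              exact ⟨hx.1, le_trans hx.2.le hcinv1⟩
          _ ≤ _ := measure_mono hsub
      exact hLHS.trans hRHS
  calc ∫⁻ t in Set.Ioi (0:ℝ), P {a | t < g (Y a)}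
      ≤ ∫⁻ t in Set.Ioi (0:ℝ), (volume.restrict (Set.Ioc (0:ℝ) 1)) {x | t < q x} := by
        refine lintegral_mono_ae ((ae_restrict_iff' measurableSet_Ioi).2 (ae_of_all _ hpt))
    _ = ∫⁻ x in Set.Ioc (0:ℝ) 1, ENNReal.ofReal (q x) := hlayer2.symm
    _ ≤ 1 := hqRHS
end

section
/- Let f : [1,∞) → [0,∞) be an increasing function with ∫₀¹ f(1/x) dx ≤ 1. Then f is a martingale calibrator: for every probability space (Ω, F, P) with filtration (F_n)_{n∈ℕ} and every test supermartingale (X_n, F_n), there exists a test supermartingale (Y_n, F_n) such that Y_n ≥ f(X*_n) for all n almost surely, where X*_n := max(1, max_{m ≤ n} X_m). -/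
open MeasureTheory ENNReal

section CalibAux

/-- Monotone extension of `f` to all of `ℝ`. -/
noncomputable def calibg (f : ℝ → ℝ) (x : ℝ) : ℝ := f (max 1 x)

/-- Tail weight function. -/
noncomputable def calibJ (f : ℝ → ℝ) (y : ℝ) : ℝ :=
  ∫ u in Set.Ioc (0 : ℝ) (max 1 y)⁻¹, calibg f u⁻¹

/-- The predictable integrand. -/
noncomputable def calibG (f : ℝ → ℝ) (y : ℝ) : ℝ :=
  calibJ f y - calibg f y / max 1 y

variable {f : ℝ → ℝ}

lemma calibg_mono (hmono : MonotoneOn f (Set.Ici (1 : ℝ))) : Monotone (calibg f) :=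
  fun a b hab => hmono (Set.mem_Ici.mpr (le_max_left _ _)) (Set.mem_Ici.mpr (le_max_left _ _)) (max_le_max le_rfl hab)

lemma calibg_nonneg (hnonneg : ∀ x ∈ Set.Ici (1 : ℝ), 0 ≤ f x) (x : ℝ) : 0 ≤ calibg f x :=
  hnonneg _ (Set.mem_Ici.mpr (le_max_left _ _))

lemma calibg_eq (x : ℝ) (hx : 1 ≤ x) : calibg f x = f x := by
  rw [calibg, max_eq_right hx]

lemma calibw_meas (hmono : MonotoneOn f (Set.Ici (1 : ℝ))) :
    Measurable fun u : ℝ => calibg f u⁻¹ :=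
  (calibg_mono hmono).measurable.comp measurable_inv

lemma one_le_inv_of_mem {u : ℝ} (hu : u ∈ Set.Ioc (0 : ℝ) 1) : (1 : ℝ) ≤ u⁻¹ := by
  have h1 : 0 < u⁻¹ := inv_pos.mpr hu.1
  have h2 : u * u⁻¹ = 1 := mul_inv_cancel₀ (ne_of_gt hu.1)
  nlinarith [hu.2]

lemma calib_lint (hmono : MonotoneOn f (Set.Ici (1 : ℝ)))
    (hint : ∫⁻ x in Set.Ioc (0 : ℝ) 1, ENNReal.ofReal (f x⁻¹) ≤ 1) :
    ∫⁻ u in Set.Ioc (0 : ℝ) 1, ENNReal.ofReal (calibg f u⁻¹) ≤ 1 := by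
  refine le_trans (le_of_eq ?_) hint
  refine setLIntegral_congr_fun measurableSet_Ioc ?_
  intro u hu
  beta_reduce
  rw [calibg_eq _ (one_le_inv_of_mem hu)]

lemma calibw_int (hmono : MonotoneOn f (Set.Ici (1 : ℝ)))
    (hnonneg : ∀ x ∈ Set.Ici (1 : ℝ), 0 ≤ f x)
    (hint : ∫⁻ x in Set.Ioc (0 : ℝ) 1, ENNReal.ofReal (f x⁻¹) ≤ 1) :
    IntegrableOn (fun u : ℝ => calibg f u⁻¹) (Set.Ioc (0 : ℝ) 1) := by
  refine ⟨(calibw_meas hmono).aestronglyMeasurable, ?_⟩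
  rw [hasFiniteIntegral_iff_ofReal
    (Filter.Eventually.of_forall fun u => calibg_nonneg hnonneg _)]
  exact lt_of_le_of_lt (calib_lint hmono hint) one_lt_top

lemma calib_inv_mem (y : ℝ) : (max 1 y)⁻¹ ∈ Set.Ioc (0 : ℝ) 1 := by
  have h1 : (0 : ℝ) < max 1 y := lt_of_lt_of_le one_pos (le_max_left _ _)
  constructor
  · exact inv_pos.mpr h1
  · rw [inv_le_one_iff₀]; right; exact le_max_left _ _

lemma calib_subset (y : ℝ) : Set.Ioc (0 : ℝ) (max 1 y)⁻¹ ⊆ Set.Ioc (0 : ℝ) 1 :=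
  Set.Ioc_subset_Ioc_right (calib_inv_mem y).2

lemma calibJ_anti (hmono : MonotoneOn f (Set.Ici (1 : ℝ)))
    (hnonneg : ∀ x ∈ Set.Ici (1 : ℝ), 0 ≤ f x)
    (hint : ∫⁻ x in Set.Ioc (0 : ℝ) 1, ENNReal.ofReal (f x⁻¹) ≤ 1) :
    Antitone (calibJ f) := by
  intro a b hab
  have hsub : Set.Ioc (0 : ℝ) (max 1 b)⁻¹ ⊆ Set.Ioc (0 : ℝ) (max 1 a)⁻¹ := by
    refine Set.Ioc_subset_Ioc_right ?_
    have h1 : (0 : ℝ) < max 1 a := lt_of_lt_of_le one_pos (le_max_left _ _)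
    exact inv_anti₀ h1 (max_le_max le_rfl hab)
  exact setIntegral_mono_set
    (((calibw_int hmono hnonneg hint)).mono_set (calib_subset a))
    (Filter.Eventually.of_forall fun u => calibg_nonneg hnonneg _)
    hsub.eventuallyLE

lemma calibJ_one_le (hmono : MonotoneOn f (Set.Ici (1 : ℝ)))
    (hnonneg : ∀ x ∈ Set.Ici (1 : ℝ), 0 ≤ f x)
    (hint : ∫⁻ x in Set.Ioc (0 : ℝ) 1, ENNReal.ofReal (f x⁻¹) ≤ 1) :
    calibJ f 1 ≤ 1 := by
  have h1 : calibJ f 1 = ∫ u in Set.Ioc (0 : ℝ) 1, calibg f u⁻¹ := by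
    rw [calibJ, max_self, inv_one]
  rw [h1, integral_eq_lintegral_of_nonneg_ae
    (Filter.Eventually.of_forall fun u => calibg_nonneg hnonneg _)
    (calibw_meas hmono).aestronglyMeasurable]
  refine ENNReal.toReal_le_of_le_ofReal zero_le_one ?_
  rw [ENNReal.ofReal_one]
  exact calib_lint hmono hint

lemma calibJ_ge (hmono : MonotoneOn f (Set.Ici (1 : ℝ)))
    (hnonneg : ∀ x ∈ Set.Ici (1 : ℝ), 0 ≤ f x)
    (hint : ∫⁻ x in Set.Ioc (0 : ℝ) 1, ENNReal.ofReal (f x⁻¹) ≤ 1)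
    {y : ℝ} (hy : 1 ≤ y) : f y * y⁻¹ ≤ calibJ f y := by
  have hy0 : (0 : ℝ) < y := lt_of_lt_of_le one_pos hy
  have hmax : max 1 y = y := max_eq_right hy
  have hconst : ∫ _u in Set.Ioc (0 : ℝ) y⁻¹, f y = y⁻¹ * f y := by
    rw [setIntegral_const, measureReal_def, Real.volume_Ioc, smul_eq_mul, sub_zero,
      ENNReal.toReal_ofReal (inv_nonneg.mpr hy0.le)]
  have hmono' : ∫ u in Set.Ioc (0 : ℝ) y⁻¹, f y ≤ ∫ u in Set.Ioc (0 : ℝ) y⁻¹, calibg f u⁻¹ := by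
    refine setIntegral_mono_on (integrableOn_const measure_Ioc_lt_top.ne)
      ((calibw_int hmono hnonneg hint).mono_set (by rw [← hmax]; exact calib_subset y))
      measurableSet_Ioc ?_
    intro u hu
    have hu0 : 0 < u := hu.1
    have huy : y ≤ u⁻¹ := by
      rw [le_inv_comm₀ hy0 hu0]
      exact hu.2
    calc f y = calibg f y := (calibg_eq y hy).symm
      _ ≤ calibg f u⁻¹ := calibg_mono hmono huy
  rw [calibJ, hmax]
  calc f y * y⁻¹ = y⁻¹ * f y := by ring
    _ = ∫ _u in Set.Ioc (0 : ℝ) y⁻¹, f y := hconst.symm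
    _ ≤ _ := hmono'

lemma calibJ_sub_ge (hmono : MonotoneOn f (Set.Ici (1 : ℝ)))
    (hnonneg : ∀ x ∈ Set.Ici (1 : ℝ), 0 ≤ f x)
    (hint : ∫⁻ x in Set.Ioc (0 : ℝ) 1, ENNReal.ofReal (f x⁻¹) ≤ 1)
    {y x : ℝ} (hy : 1 ≤ y) (hyx : y ≤ x) :
    f y * (y⁻¹ - x⁻¹) ≤ calibJ f y - calibJ f x := by
  have hy0 : (0 : ℝ) < y := lt_of_lt_of_le one_pos hy
  have hx1 : (1 : ℝ) ≤ x := le_trans hy hyx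
  have hx0 : (0 : ℝ) < x := lt_of_lt_of_le one_pos hx1
  have hinv : x⁻¹ ≤ y⁻¹ := inv_anti₀ hy0 hyx
  have hmaxy : max 1 y = y := max_eq_right hy
  have hmaxx : max 1 x = x := max_eq_right hx1
  have hx_int : IntegrableOn (fun u : ℝ => calibg f u⁻¹) (Set.Ioc (0 : ℝ) x⁻¹) :=
    (calibw_int hmono hnonneg hint).mono_set (by rw [← hmaxx]; exact calib_subset x)
  have ht_int : IntegrableOn (fun u : ℝ => calibg f u⁻¹) (Set.Ioc x⁻¹ y⁻¹) := by
    refine (calibw_int hmono hnonneg hint).mono_set ?_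
    refine Set.Ioc_subset_Ioc (inv_pos.mpr hx0).le ?_
    have : y⁻¹ ≤ 1 := by rw [← hmaxy]; exact (calib_inv_mem y).2
    exact this
  have hsplit : calibJ f y = calibJ f x + ∫ u in Set.Ioc x⁻¹ y⁻¹, calibg f u⁻¹ := by
    rw [calibJ, calibJ, hmaxy, hmaxx]
    rw [← setIntegral_union (Set.Ioc_disjoint_Ioc_of_le le_rfl) measurableSet_Ioc hx_int ht_int]
    rw [Set.Ioc_union_Ioc_eq_Ioc (inv_pos.mpr hx0).le hinv]
  have htail : f y * (y⁻¹ - x⁻¹) ≤ ∫ u in Set.Ioc x⁻¹ y⁻¹, calibg f u⁻¹ := by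
    have hconst : ∫ _u in Set.Ioc x⁻¹ y⁻¹, f y = (y⁻¹ - x⁻¹) * f y := by
      rw [setIntegral_const, measureReal_def, Real.volume_Ioc, smul_eq_mul,
        ENNReal.toReal_ofReal (by linarith)]
    have hmono' : ∫ u in Set.Ioc x⁻¹ y⁻¹, f y ≤ ∫ u in Set.Ioc x⁻¹ y⁻¹, calibg f u⁻¹ := by
      refine setIntegral_mono_on (integrableOn_const measure_Ioc_lt_top.ne)
        ht_int measurableSet_Ioc ?_
      intro u hu
      have hu0 : 0 < u := lt_of_le_of_lt (inv_pos.mpr hx0).le hu.1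
      have huy : y ≤ u⁻¹ := by
        rw [le_inv_comm₀ hy0 hu0]
        exact hu.2
      calc f y = calibg f y := (calibg_eq y hy).symm
        _ ≤ calibg f u⁻¹ := calibg_mono hmono huy
    calc f y * (y⁻¹ - x⁻¹) = (y⁻¹ - x⁻¹) * f y := by ring
      _ = ∫ _u in Set.Ioc x⁻¹ y⁻¹, f y := hconst.symm
      _ ≤ _ := hmono'
  linarith

/-- The key inequality. -/
lemma calib_keyA (hmono : MonotoneOn f (Set.Ici (1 : ℝ)))
    (hnonneg : ∀ x ∈ Set.Ici (1 : ℝ), 0 ≤ f x)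
    (hint : ∫⁻ x in Set.Ioc (0 : ℝ) 1, ENNReal.ofReal (f x⁻¹) ≤ 1)
    {y x : ℝ} (hy : 1 ≤ y) (hyx : y ≤ x) :
    f x + x * calibG f x ≤ f y + x * calibG f y := by
  have hy0 : (0 : ℝ) < y := lt_of_lt_of_le one_pos hy
  have hx1 : (1 : ℝ) ≤ x := le_trans hy hyx
  have hx0 : (0 : ℝ) < x := lt_of_lt_of_le one_pos hx1
  have h2 := calibJ_sub_ge hmono hnonneg hint hy hyx
  have key : x * (f y * (y⁻¹ - x⁻¹)) ≤ x * (calibJ f y - calibJ f x) :=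
    mul_le_mul_of_nonneg_left h2 hx0.le
  rw [calibG, calibG, max_eq_right hy, max_eq_right hx1, calibg_eq y hy, calibg_eq x hx1]
  have e1 : f x + x * (calibJ f x - f x / x) = x * calibJ f x := by
    field_simp
    ring
  have e2 : x * (f y * (y⁻¹ - x⁻¹)) = x * f y * y⁻¹ - f y := by
    field_simp
  have e3 : f y + x * (calibJ f y - f y / y) = f y + x * calibJ f y - x * f y * y⁻¹ := by
    field_simp; ring
  rw [e1, e3]
  linarith [key, e2]

lemma calibG_nonneg (hmono : MonotoneOn f (Set.Ici (1 : ℝ)))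
    (hnonneg : ∀ x ∈ Set.Ici (1 : ℝ), 0 ≤ f x)
    (hint : ∫⁻ x in Set.Ioc (0 : ℝ) 1, ENNReal.ofReal (f x⁻¹) ≤ 1)
    {y : ℝ} (hy : 1 ≤ y) : 0 ≤ calibG f y := by
  have hy0 : (0 : ℝ) < y := lt_of_lt_of_le one_pos hy
  have h := calibJ_ge hmono hnonneg hint hy
  rw [calibG, max_eq_right hy, calibg_eq y hy]
  rw [div_eq_mul_inv]
  linarith

lemma calibG_le_one (hmono : MonotoneOn f (Set.Ici (1 : ℝ)))
    (hnonneg : ∀ x ∈ Set.Ici (1 : ℝ), 0 ≤ f x)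
    (hint : ∫⁻ x in Set.Ioc (0 : ℝ) 1, ENNReal.ofReal (f x⁻¹) ≤ 1)
    {y : ℝ} (hy : 1 ≤ y) : calibG f y ≤ 1 := by
  have hy0 : (0 : ℝ) < y := lt_of_lt_of_le one_pos hy
  have h1 : calibJ f y ≤ calibJ f 1 := calibJ_anti hmono hnonneg hint hy
  have h2 : calibJ f 1 ≤ 1 := calibJ_one_le hmono hnonneg hint
  have h3 : 0 ≤ calibg f y / max 1 y :=
    div_nonneg (calibg_nonneg hnonneg y) (le_trans zero_le_one (le_max_left _ _))
  rw [calibG]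
  linarith

lemma calibG_meas (hmono : MonotoneOn f (Set.Ici (1 : ℝ)))
    (hnonneg : ∀ x ∈ Set.Ici (1 : ℝ), 0 ≤ f x)
    (hint : ∫⁻ x in Set.Ioc (0 : ℝ) 1, ENNReal.ofReal (f x⁻¹) ≤ 1) :
    Measurable (calibG f) :=
  ((calibJ_anti hmono hnonneg hint).measurable).sub
    (((calibg_mono hmono).measurable).div (measurable_const.max measurable_id))

lemma calibG_one (f : ℝ → ℝ) : calibG f 1 = calibJ f 1 - f 1 := by
  rw [calibG, max_self, div_one, calibg_eq 1 le_rfl]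

end CalibAux

/-- If `f : [1,∞) → [0,∞)` is increasing with `∫₀¹ f(1/x) dx ≤ 1`,
then `f` is a martingale calibrator: for every probability space with filtration
`(ℱ_n)` and every test supermartingale `(X_n, ℱ_n)`, there is a test supermartingale
`(Y_n, ℱ_n)` with `Y_n ≥ f(X*_n)` for all `n` almost surely, where
`X*_n := max(1, max_{m ≤ n} X_m)`. -/
theorem increasing_with_small_integral_is_martingale_calibrator
    (f : ℝ → ℝ)
    (hmono : MonotoneOn f (Set.Ici (1 : ℝ)))
    (hnonneg : ∀ x ∈ Set.Ici (1 : ℝ), 0 ≤ f x)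
    (hint : ∫⁻ x in Set.Ioc (0 : ℝ) 1, ENNReal.ofReal (f x⁻¹) ≤ 1)
    {Ω : Type*} {m : MeasurableSpace Ω} {P : Measure Ω} [IsProbabilityMeasure P]
    {ℱ : Filtration ℕ m} {X : ℕ → Ω → ℝ}
    (hX : Supermartingale X ℱ P)
    (hpos : ∀ n, 0 ≤ᵐ[P] X n)
    (h0 : ∫ ω, X 0 ω ∂P ≤ 1) :
    ∃ Y : ℕ → Ω → ℝ,
      Supermartingale Y ℱ P ∧
      (∀ n, 0 ≤ᵐ[P] Y n) ∧
      (∫ ω, Y 0 ω ∂P ≤ 1) ∧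
      (∀ᵐ ω ∂P, ∀ n, f (max 1 (⨆ i : Fin (n + 1), X i ω)) ≤ Y n ω) := by
  classical
  -- the running maximum
  set S : ℕ → Ω → ℝ := fun n ω => max 1 (⨆ i : Fin (n + 1), X i ω) with hS_def
  have hsup_succ : ∀ n (ω : Ω),
      (⨆ i : Fin (n + 2), X i ω) = max (⨆ i : Fin (n + 1), X i ω) (X (n + 1) ω) := by
    intro n ω
    apply le_antisymm
    · refine ciSup_le fun i => ?_
      rcases lt_or_ge (i : ℕ) (n + 1) with h | h
      · exact le_max_of_le_left
          (le_ciSup_of_le (Finite.bddAbove_range _) (⟨(i : ℕ), h⟩ : Fin (n + 1)) le_rfl)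
      · have hieq : (i : ℕ) = n + 1 := le_antisymm (Nat.lt_succ_iff.mp i.isLt) h
        rw [hieq]
        exact le_max_right _ _
    · refine max_le (ciSup_le fun i => ?_) ?_
      · exact le_ciSup_of_le (Finite.bddAbove_range _)
          (⟨(i : ℕ), by omega⟩ : Fin (n + 2)) le_rfl
      · exact le_ciSup_of_le (Finite.bddAbove_range _)
          (⟨n + 1, by omega⟩ : Fin (n + 2)) le_rfl
  have hS0 : ∀ ω : Ω, S 0 ω = max 1 (X 0 ω) := by
    intro ω
    show max 1 (⨆ i : Fin 1, X i ω) = max 1 (X 0 ω)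
    have h1 : (⨆ i : Fin 1, X i ω) = X ((default : Fin 1) : ℕ) ω := ciSup_unique
    rw [h1]
    rfl
  have hS_rec : ∀ n (ω : Ω), S (n + 1) ω = max (S n ω) (X (n + 1) ω) := by
    intro n ω
    rw [hS_def]
    simp only
    rw [hsup_succ n ω, ← max_assoc]
  have hS_ge1 : ∀ n (ω : Ω), 1 ≤ S n ω := fun n ω => le_max_left _ _
  have hS_meas : ∀ n, Measurable[ℱ n] (S n) := by
    intro n
    induction n with
    | zero =>
      have : S 0 = fun ω => max 1 (X 0 ω) := funext hS0
      rw [this]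
      exact measurable_const.max (hX.stronglyAdapted 0).measurable
    | succ n ih =>
      have : S (n + 1) = fun ω => max (S n ω) (X (n + 1) ω) := funext (hS_rec n)
      rw [this]
      exact (ih.mono (ℱ.mono n.le_succ) le_rfl).max (hX.stronglyAdapted (n + 1)).measurable
  -- the predictable integrand
  set ξ : ℕ → Ω → ℝ := fun n ω => calibG f (S n ω) with hξ_def
  have hξ_adapted : StronglyAdapted ℱ ξ := fun n =>
    ((calibG_meas hmono hnonneg hint).comp (hS_meas n)).stronglyMeasurable
  have hξ_bdd : ∀ n (ω : Ω), ξ n ω ≤ 1 := fun n ω =>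
    calibG_le_one hmono hnonneg hint (hS_ge1 n ω)
  have hξ_nonneg : ∀ n (ω : Ω), 0 ≤ ξ n ω := fun n ω =>
    calibG_nonneg hmono hnonneg hint (hS_ge1 n ω)
  -- the candidate process
  set Y : ℕ → Ω → ℝ := fun n ω =>
    (1 - calibG f 1 + calibG f 1 * X 0 ω) +
      ∑ k ∈ Finset.range n, ξ k ω * (X (k + 1) ω - X k ω) with hY_def
  -- supermartingale property
  have hM : Martingale (fun _ : ℕ => fun ω => 1 - calibG f 1 + calibG f 1 * X 0 ω) ℱ P := by
    refine martingale_const_fun ℱ P ?_ ?_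
    · exact stronglyMeasurable_const.add ((hX.stronglyAdapted 0).const_mul _)
    · exact (integrable_const _).add ((hX.integrable 0).const_mul _)
  have hsub := (hX.neg).sum_mul_sub hξ_adapted hξ_bdd hξ_nonneg
  have hYsm : Supermartingale Y ℱ P := by
    have h1 := hM.supermartingale.add hsub.neg
    have h2 : Y = (fun _ : ℕ => fun ω => 1 - calibG f 1 + calibG f 1 * X 0 ω) +
        -(fun n => ∑ k ∈ Finset.range n, ξ k * ((-X) (k + 1) - (-X) k)) := by
      funext n ω
      simp only [hY_def, Pi.add_apply, Pi.neg_apply, Finset.sum_apply, Pi.mul_apply,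
        Pi.sub_apply]
      rw [← Finset.sum_neg_distrib]
      congr 1
      exact Finset.sum_congr rfl fun k _ => by ring
    rw [h2]
    exact h1
  -- the invariant
  have hG1 : calibG f 1 = calibJ f 1 - f 1 := calibG_one f
  have hinv : ∀ (ω : Ω) (n : ℕ),
      f (S n ω) + X n ω * ξ n ω + (1 - calibJ f 1) ≤ Y n ω := by
    intro ω n
    induction n with
    | zero =>
      have hY0 : Y 0 ω = 1 - calibG f 1 + calibG f 1 * X 0 ω := by
        simp [hY_def]
      rw [hY0]
      rcases le_total (X 0 ω) 1 with h | h
      · have hs : S 0 ω = 1 := by rw [hS0 ω, max_eq_left h]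
        rw [hξ_def]
        simp only
        rw [hs]
        nlinarith [hG1]
      · have hs : S 0 ω = X 0 ω := by rw [hS0 ω, max_eq_right h]
        have hk := calib_keyA hmono hnonneg hint le_rfl h
        rw [hξ_def]
        simp only
        rw [hs]
        nlinarith [hk, hG1]
    | succ n ih =>
      have hYs : Y (n + 1) ω = Y n ω + ξ n ω * (X (n + 1) ω - X n ω) := by
        simp only [hY_def, Finset.sum_range_succ]
        ring
      rcases le_total (X (n + 1) ω) (S n ω) with h | h
      · have hs : S (n + 1) ω = S n ω := by rw [hS_rec n ω, max_eq_left h]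
        rw [hYs, hξ_def]
        simp only
        rw [hs]
        have hxi := hξ_def
        have e : ξ n ω * (X (n + 1) ω - X n ω)
            = X (n + 1) ω * calibG f (S n ω) - X n ω * calibG f (S n ω) := by
          rw [hξ_def]; ring
        have ih' : f (S n ω) + X n ω * calibG f (S n ω) + (1 - calibJ f 1) ≤ Y n ω := by
          have := ih; rw [hξ_def] at this; exact this
        linarith [ih', e]
      · have hs : S (n + 1) ω = X (n + 1) ω := by rw [hS_rec n ω, max_eq_right h]
        have hk := calib_keyA hmono hnonneg hint (hS_ge1 n ω) h
        rw [hYs, hξ_def]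
        simp only
        rw [hs]
        have e : calibG f (S n ω) * (X (n + 1) ω - X n ω)
            = X (n + 1) ω * calibG f (S n ω) - X n ω * calibG f (S n ω) := by ring
        have ih' : f (S n ω) + X n ω * calibG f (S n ω) + (1 - calibJ f 1) ≤ Y n ω := by
          have := ih; rw [hξ_def] at this; exact this
        linarith [ih', e, hk]
  -- wrap up
  have hJ1 : calibJ f 1 ≤ 1 := calibJ_one_le hmono hnonneg hint
  have hG1nn : 0 ≤ calibG f 1 := calibG_nonneg hmono hnonneg hint le_rfl
  have haeX : ∀ᵐ ω ∂P, ∀ n, 0 ≤ X n ω := (ae_all_iff).mpr hpos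
  refine ⟨Y, hYsm, ?_, ?_, ?_⟩
  · intro n
    filter_upwards [haeX] with ω hω
    have h1 := hinv ω n
    have h2 : 0 ≤ f (S n ω) := hnonneg _ (hS_ge1 n ω)
    have h3 : 0 ≤ X n ω * ξ n ω := mul_nonneg (hω n) (hξ_nonneg n ω)
    simp only [Pi.zero_apply]
    linarith
  · have hY0 : (fun ω => Y 0 ω) = fun ω => (1 - calibG f 1) + calibG f 1 * X 0 ω := by
      funext ω
      simp [hY_def]
    rw [hY0, integral_add (integrable_const _) ((hX.integrable 0).const_mul _),
      integral_const, integral_const_mul]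
    simp only [probReal_univ, measure_univ, ENNReal.toReal_one, smul_eq_mul, one_mul]
    nlinarith [mul_le_mul_of_nonneg_left h0 hG1nn]
  · filter_upwards [haeX] with ω hω
    intro n
    have h1 := hinv ω n
    have h3 : 0 ≤ X n ω * ξ n ω := mul_nonneg (hω n) (hξ_nonneg n ω)
    have hgoal : f (max 1 (⨆ i : Fin (n + 1), X i ω)) = f (S n ω) := by rw [hS_def]
    rw [hgoal]
    linarith
end

section
/- Let f : [1,∞) → [0,∞) be an increasing function that is a martingale calibrator: for every probability space with filtration (F_n)_{n∈ℕ} and every test martingale (X_n, F_n), there exists a test supermartingale (Y_n, F_n) with Y_n ≥ f(X*_n) for all n almost surely, where X*_n := max(1, max_{m ≤ n} X_m). Then ∫₀¹ f(1/x) dx ≤ 1. -/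
open MeasureTheory ENNReal

namespace CalibratorAux

noncomputable def μ0 : Measure ℝ := volume.restrict (Set.Ioc (0:ℝ) 1)

instance : IsProbabilityMeasure μ0 :=
  ⟨by simp [μ0, Real.volume_Ioc]⟩

variable (r : ℝ)

def A (n : ℕ) : Set ℝ := Set.Ioc 0 (r ^ n)

noncomputable def X (n : ℕ) : ℝ → ℝ := (A r n).indicator fun _ => (r ^ n)⁻¹

def Fn (n : ℕ) : MeasurableSpace ℝ :=
  MeasurableSpace.generateFrom ((fun k => A r k) '' Set.Iic n)

lemma measurableSet_A (n : ℕ) : MeasurableSet (A r n) := measurableSet_Ioc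

lemma Fn_le (n : ℕ) : Fn r n ≤ (inferInstance : MeasurableSpace ℝ) := by
  apply MeasurableSpace.generateFrom_le
  rintro t ⟨k, -, rfl⟩
  exact measurableSet_Ioc

lemma Fn_mono : Monotone (Fn r) := fun _ _ hij =>
  MeasurableSpace.generateFrom_mono (Set.image_mono (Set.Iic_subset_Iic.2 hij))

noncomputable def 𝓕 : Filtration ℕ (inferInstance : MeasurableSpace ℝ) :=
  ⟨Fn r, Fn_mono r, Fn_le r⟩

lemma measurableSet_A_Fn {k n : ℕ} (h : k ≤ n) : MeasurableSet[Fn r n] (A r k) :=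
  MeasurableSpace.measurableSet_generateFrom ⟨k, h, rfl⟩

variable {r}

lemma atom (hr0 : 0 < r) (hr1 : r < 1) (n : ℕ) {s : Set ℝ}
    (hs : MeasurableSet[Fn r n] s) :
    A r n ⊆ s ∨ Disjoint (A r n) s := by
  refine MeasurableSpace.generateFrom_induction _
    (fun s _ => A r n ⊆ s ∨ Disjoint (A r n) s) ?_ ?_ ?_ ?_ s hs
  · rintro t ⟨k, hk, rfl⟩ -
    left
    exact Set.Ioc_subset_Ioc le_rfl (pow_le_pow_of_le_one hr0.le hr1.le hk)
  · right; exact Set.disjoint_empty _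
  · rintro t - (h | h)
    · right
      exact Set.disjoint_left.2 fun x hx hxc => hxc (h hx)
    · left
      exact fun x hx hxt => Set.disjoint_left.1 h hx hxt
  · rintro g hg hp
    by_cases h : ∃ m, A r n ⊆ g m
    · obtain ⟨m, hm⟩ := h
      exact Or.inl (hm.trans (Set.subset_iUnion g m))
    · right
      push_neg at h
      refine Set.disjoint_iUnion_right.2 fun m => ?_
      rcases hp m with hsub | hdisj
      · exact absurd hsub (h m)
      · exact hdisj

lemma setIntegral_X (hr0 : 0 < r) (hr1 : r < 1) (n : ℕ) {s : Set ℝ}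
    (hs : MeasurableSet s) :
    ∫ x in s, X r n x ∂μ0 = (volume (s ∩ A r n)).toReal * (r ^ n)⁻¹ := by
  have hA : MeasurableSet (A r n) := measurableSet_Ioc
  have hsub : A r n ⊆ Set.Ioc (0:ℝ) 1 :=
    Set.Ioc_subset_Ioc le_rfl (pow_le_one₀ hr0.le hr1.le)
  rw [X, setIntegral_indicator hA, setIntegral_const, smul_eq_mul]
  congr 1
  rw [μ0, measureReal_def, Measure.restrict_apply (hs.inter hA)]
  congr 1
  rw [Set.inter_assoc, Set.inter_eq_self_of_subset_left hsub]

lemma volume_A_mul (hr0 : 0 < r) (n : ℕ) :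
    (volume (A r n)).toReal * (r ^ n)⁻¹ = 1 := by
  rw [A, Real.volume_Ioc, sub_zero, ENNReal.toReal_ofReal (by positivity)]
  exact mul_inv_cancel₀ (by positivity)

lemma integral_X (hr0 : 0 < r) (hr1 : r < 1) (n : ℕ) :
    ∫ x, X r n x ∂μ0 = 1 := by
  have := setIntegral_X hr0 hr1 (n := n) (s := Set.univ) MeasurableSet.univ
  rw [setIntegral_univ] at this
  rw [this, Set.univ_inter, volume_A_mul hr0]

lemma integrable_X (n : ℕ) : Integrable (X r n) μ0 :=
  (integrable_const _).indicator (measurableSet_A r n)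

lemma A_antitone (hr0 : 0 < r) (hr1 : r < 1) : Antitone (A r) := fun i j hij =>
  Set.Ioc_subset_Ioc le_rfl (pow_le_pow_of_le_one hr0.le hr1.le hij)

lemma martingale_X (hr0 : 0 < r) (hr1 : r < 1) : Martingale (X r) (𝓕 r) μ0 := by
  constructor
  · intro n
    exact stronglyMeasurable_const.indicator (measurableSet_A_Fn r le_rfl)
  · intro i j hij
    refine (ae_eq_condExp_of_forall_setIntegral_eq ((𝓕 r).le i) (integrable_X j)
      (fun s _ _ => (integrable_X i).integrableOn) (fun s hs _ => ?_) ?_).symm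
    · have hs' : MeasurableSet s := Fn_le r i s hs
      rw [setIntegral_X hr0 hr1 i hs', setIntegral_X hr0 hr1 j hs']
      rcases atom hr0 hr1 i hs with hsub | hdisj
      · have hji : A r j ⊆ s := (A_antitone hr0 hr1 hij).trans hsub
        rw [Set.inter_eq_self_of_subset_right hji,
          Set.inter_eq_self_of_subset_right hsub,
          volume_A_mul hr0, volume_A_mul hr0]
      · have h1 : s ∩ A r i = ∅ := (hdisj.symm).inter_eq
        have h2 : s ∩ A r j = ∅ := by
          apply Set.eq_empty_of_subset_empty
          rw [← h1]
          exact Set.inter_subset_inter_right s (A_antitone hr0 hr1 hij)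
        rw [h1, h2]
        simp
    · exact StronglyMeasurable.aestronglyMeasurable
        (stronglyMeasurable_const.indicator (measurableSet_A_Fn r le_rfl))

end CalibratorAux

namespace CalibratorAux
open CalibratorAux

lemma key {r : ℝ} (f : ℝ → ℝ)
    (hmono : MonotoneOn f (Set.Ici (1 : ℝ)))
    (hcal : ∀ (Ω : Type) (m : MeasurableSpace Ω) (P : Measure Ω),
      IsProbabilityMeasure P →
      ∀ (ℱ : Filtration ℕ m) (X : ℕ → Ω → ℝ),
      Martingale X ℱ P → (∀ n, 0 ≤ᵐ[P] X n) → (∫ ω, X 0 ω ∂P = 1) →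
      ∃ Y : ℕ → Ω → ℝ,
        Supermartingale Y ℱ P ∧
        (∀ n, 0 ≤ᵐ[P] Y n) ∧
        (∫ ω, Y 0 ω ∂P ≤ 1) ∧
        (∀ᵐ ω ∂P, ∀ n, f (max 1 (⨆ i : Fin (n + 1), X i ω)) ≤ Y n ω))
    (hr0 : 0 < r) (hr1 : r < 1) :
    ∫⁻ x in Set.Ioc (0:ℝ) 1, ENNReal.ofReal (f (max 1 (r * x⁻¹))) ≤ 1 := by
  classical
  obtain ⟨Y, hY, hYnn, hY0, hdom⟩ :=
    hcal ℝ _ μ0 inferInstance (𝓕 r) (X r) (martingale_X hr0 hr1)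
      (fun n => Filter.Eventually.of_forall fun ω =>
        Set.indicator_nonneg (fun x _ => by positivity) ω)
      (integral_X hr0 hr1 0)
  have hEY : ∀ n, ∫ ω, Y n ω ∂μ0 ≤ 1 := by
    intro n
    have h := hY.setIntegral_le (Nat.zero_le n) (s := Set.univ) MeasurableSet.univ
    rw [setIntegral_univ, setIntegral_univ] at h
    exact h.trans hY0
  set g : ℕ → ℝ → ℝ≥0∞ :=
    fun n ω => ENNReal.ofReal (f (max 1 (min ((r ^ n)⁻¹) (r * ω⁻¹)))) with hgdef
  have hFmono : Monotone (fun t => f (max 1 t)) := fun a b hab =>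
    hmono (Set.mem_Ici.2 (le_max_left _ _)) (Set.mem_Ici.2 (le_max_left _ _)) (max_le_max le_rfl hab)
  have hgmeas : ∀ n, Measurable (g n) := fun n =>
    ENNReal.measurable_ofReal.comp
      (hFmono.measurable.comp (measurable_const.min (measurable_inv.const_mul r)))
  have hgmono : Monotone g := by
    intro a b hab
    intro ω
    apply ENNReal.ofReal_le_ofReal
    apply hFmono
    exact min_le_min
      (inv_anti₀ (pow_pos hr0 b) (pow_le_pow_of_le_one hr0.le hr1.le hab)) le_rfl
  have hmem : ∀ᵐ ω ∂μ0, ω ∈ Set.Ioc (0:ℝ) 1 := ae_restrict_mem measurableSet_Ioc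
  have hbound : ∀ n, ∫⁻ ω, g n ω ∂μ0 ≤ 1 := by
    intro n
    have hae : ∀ᵐ ω ∂μ0, g n ω ≤ ENNReal.ofReal (Y n ω) := by
      filter_upwards [hdom, hmem] with ω hω hωmem
      refine ENNReal.ofReal_le_ofReal (le_trans ?_ (hω n))
      have hXle : ∀ k : ℕ, k ≤ n → ω ∈ A r k →
          (r ^ k)⁻¹ ≤ max 1 (⨆ i : Fin (n + 1), X r i ω) := by
        intro k hk hmemk
        have h1 : X r k ω = (r ^ k)⁻¹ := Set.indicator_of_mem hmemk _
        calc (r ^ k)⁻¹ = X r k ω := h1.symm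
          _ ≤ ⨆ i : Fin (n + 1), X r i ω :=
              le_ciSup (f := fun i : Fin (n + 1) => X r (i : ℕ) ω)
                (Set.Finite.bddAbove (Set.finite_range _))
                (⟨k, Nat.lt_succ_of_le hk⟩ : Fin (n + 1))
          _ ≤ max 1 (⨆ i : Fin (n + 1), X r i ω) := le_max_right _ _
      have hBle : min ((r ^ n)⁻¹) (r * ω⁻¹) ≤ max 1 (⨆ i : Fin (n + 1), X r i ω) := by
        by_cases hc : ω ≤ r ^ n
        · exact le_trans (min_le_left _ _) (hXle n le_rfl ⟨hωmem.1, hc⟩)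
        · set j := Nat.findGreatest (fun k => ω ≤ r ^ k) n with hjdef
          have hjn : j ≤ n := Nat.findGreatest_le n
          have hPj : ω ≤ r ^ j :=
            Nat.findGreatest_spec (P := fun k => ω ≤ r ^ k) (Nat.zero_le n)
              (by simpa using hωmem.2)
          have hjlt : j < n := hjn.lt_of_ne (fun h => hc (h ▸ hPj))
          have hnot : ¬ ω ≤ r ^ (j + 1) :=
            Nat.findGreatest_is_greatest (Nat.lt_succ_self _) hjlt
          have h1 : r ^ (j + 1) ≤ ω := (not_le.1 hnot).le
          have h2 : r * ω⁻¹ ≤ (r ^ j)⁻¹ := by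
            have h3 : ω⁻¹ ≤ (r ^ (j + 1))⁻¹ :=
              inv_anti₀ (pow_pos hr0 _) h1
            calc r * ω⁻¹ ≤ r * (r ^ (j + 1))⁻¹ := by
                  exact mul_le_mul_of_nonneg_left h3 hr0.le
              _ = (r ^ j)⁻¹ := by
                  rw [pow_succ]
                  field_simp
          exact le_trans (min_le_right _ _) (h2.trans (hXle j hjn ⟨hωmem.1, hPj⟩))
      exact hmono (Set.mem_Ici.2 (le_max_left _ _)) (Set.mem_Ici.2 (le_max_left _ _))
        (max_le (le_max_left _ _) hBle)
    calc ∫⁻ ω, g n ω ∂μ0 ≤ ∫⁻ ω, ENNReal.ofReal (Y n ω) ∂μ0 := lintegral_mono_ae hae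
      _ = ENNReal.ofReal (∫ ω, Y n ω ∂μ0) :=
          (ofReal_integral_eq_lintegral_ofReal (hY.integrable n) (hYnn n)).symm
      _ ≤ ENNReal.ofReal 1 := ENNReal.ofReal_le_ofReal (hEY n)
      _ = 1 := ENNReal.ofReal_one
  have hsup : ∫⁻ ω, (⨆ n, g n ω) ∂μ0 ≤ 1 := by
    rw [lintegral_iSup hgmeas hgmono]
    exact iSup_le hbound
  refine le_trans ?_ hsup
  show ∫⁻ x, ENNReal.ofReal (f (max 1 (r * x⁻¹))) ∂μ0 ≤ _
  refine lintegral_mono_ae ?_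
  filter_upwards [hmem] with x hx
  have hx0 : 0 < x := hx.1
  obtain ⟨n, hn⟩ := exists_pow_lt_of_lt_one (div_pos hx0 hr0) hr1
  have heq : r * x⁻¹ = (x / r)⁻¹ := by field_simp
  have hle : r * x⁻¹ ≤ (r ^ n)⁻¹ := by
    rw [heq]; exact inv_anti₀ (pow_pos hr0 n) hn.le
  have : g n x = ENNReal.ofReal (f (max 1 (r * x⁻¹))) := by
    rw [hgdef]
    simp only [min_eq_right hle]
  calc ENNReal.ofReal (f (max 1 (r * x⁻¹))) = g n x := this.symm
    _ ≤ ⨆ n, g n x := le_iSup (fun m => g m x) n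

end CalibratorAux

/-- If an increasing function `f : [1,∞) → [0,∞)` is a martingale
calibrator — for every probability space with filtration `(ℱ_n)` and every test
martingale `(X_n, ℱ_n)` there is a test supermartingale `(Y_n, ℱ_n)` with
`Y_n ≥ f(X*_n)` for all `n` almost surely, where `X*_n := max(1, max_{m ≤ n} X_m)` —
then `∫₀¹ f(1/x) dx ≤ 1`. -/
theorem martingale_calibrator_has_small_integral
    (f : ℝ → ℝ)
    (hmono : MonotoneOn f (Set.Ici (1 : ℝ)))
    (hnonneg : ∀ x ∈ Set.Ici (1 : ℝ), 0 ≤ f x)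
    (hcal : ∀ (Ω : Type) (m : MeasurableSpace Ω) (P : Measure Ω),
      IsProbabilityMeasure P →
      ∀ (ℱ : Filtration ℕ m) (X : ℕ → Ω → ℝ),
      Martingale X ℱ P → (∀ n, 0 ≤ᵐ[P] X n) → (∫ ω, X 0 ω ∂P = 1) →
      ∃ Y : ℕ → Ω → ℝ,
        Supermartingale Y ℱ P ∧
        (∀ n, 0 ≤ᵐ[P] Y n) ∧
        (∫ ω, Y 0 ω ∂P ≤ 1) ∧
        (∀ᵐ ω ∂P, ∀ n, f (max 1 (⨆ i : Fin (n + 1), X i ω)) ≤ Y n ω)) :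
    ∫⁻ x in Set.Ioc (0 : ℝ) 1, ENNReal.ofReal (f x⁻¹) ≤ 1 := by
  have hFmono : Monotone (fun t : ℝ => f (max 1 t)) := fun a b hab =>
    hmono (Set.mem_Ici.2 (le_max_left _ _)) (Set.mem_Ici.2 (le_max_left _ _)) (max_le_max le_rfl hab)
  set G : ℝ → ℝ≥0∞ := fun y => ENNReal.ofReal (f (max 1 y⁻¹)) with hGdef
  have hGmeas : Measurable G :=
    ENNReal.measurable_ofReal.comp (hFmono.measurable.comp measurable_inv)
  set T := ∫⁻ x in Set.Ioc (0:ℝ) 1, ENNReal.ofReal (f x⁻¹) with hTdef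
  have hTeq : T = ∫⁻ x in Set.Ioc (0:ℝ) 1, G x := by
    refine setLIntegral_congr_fun measurableSet_Ioc
      (fun x hx => ?_)
    have h1 : (1:ℝ) ≤ x⁻¹ := one_le_inv_iff₀.2 ⟨hx.1, hx.2⟩
    rw [hGdef]
    simp only [max_eq_right h1]
  have hmul : ∀ r : ℝ, 0 < r → r < 1 → ENNReal.ofReal r * T ≤ 1 := by
    intro r hr0 hr1
    have hkey := CalibratorAux.key f hmono hcal hr0 hr1
    set c := r⁻¹ with hcdef
    have hc0 : 0 < c := inv_pos.2 hr0
    have hc1 : (1:ℝ) ≤ c := one_le_inv_iff₀.2 ⟨hr0, hr1.le⟩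
    have hGe : ∀ x : ℝ, G (c * x) = ENNReal.ofReal (f (max 1 (r * x⁻¹))) := by
      intro x
      rw [hGdef]
      simp only
      rw [mul_inv, hcdef, inv_inv]
    have hpre : (fun x => c * x) ⁻¹' (Set.Ioc 0 c) = Set.Ioc (0:ℝ) 1 := by
      rw [Set.preimage_const_mul_Ioc₀ _ _ hc0, zero_div, div_self hc0.ne']
    have hmap : Measure.map (fun x => c * x) (volume.restrict (Set.Ioc (0:ℝ) 1))
        = ENNReal.ofReal r • volume.restrict (Set.Ioc 0 c) := by
      rw [← hpre, ← Measure.restrict_map (measurable_const_mul c) measurableSet_Ioc,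
        Real.map_volume_mul_left hc0.ne']
      rw [hcdef, inv_inv, abs_of_pos hr0, Measure.restrict_smul]
    calc ENNReal.ofReal r * T
        ≤ ENNReal.ofReal r * ∫⁻ y in Set.Ioc (0:ℝ) c, G y ∂volume := by
          rw [hTeq]
          exact mul_le_mul_right (lintegral_mono'
            (Measure.restrict_mono (Set.Ioc_subset_Ioc le_rfl hc1) le_rfl) le_rfl) _
      _ = ∫⁻ y, G y ∂(ENNReal.ofReal r • volume.restrict (Set.Ioc 0 c)) := by
          rw [lintegral_smul_measure, smul_eq_mul]
      _ = ∫⁻ y, G y ∂(Measure.map (fun x => c * x) (volume.restrict (Set.Ioc (0:ℝ) 1))) := by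
          rw [hmap]
      _ = ∫⁻ x in Set.Ioc (0:ℝ) 1, G (c * x) ∂volume :=
          lintegral_map hGmeas (measurable_const_mul c)
      _ = ∫⁻ x in Set.Ioc (0:ℝ) 1, ENNReal.ofReal (f (max 1 (r * x⁻¹))) ∂volume := by
          simp only [hGe]
      _ ≤ 1 := hkey
  refine ENNReal.le_of_forall_nnreal_lt fun p hp => ?_
  by_cases hp1 : (p : ℝ≥0∞) ≤ 1
  · exact hp1
  · exfalso
    push_neg at hp1
    have hppos : (1:ℝ) < (p:ℝ) := by exact_mod_cast hp1
    have hp0 : (0:ℝ) < (p:ℝ) := lt_trans one_pos hppos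
    set r := ((p:ℝ))⁻¹ with hrdef
    have hr0 : 0 < r := inv_pos.2 hp0
    have hr1 : r < 1 := inv_lt_one_of_one_lt₀ hppos
    have h := hmul r hr0 hr1
    have hrp : ENNReal.ofReal r * (p : ℝ≥0∞) = 1 := by
      rw [← ENNReal.ofReal_coe_nnreal, ← ENNReal.ofReal_mul hr0.le, hrdef,
        inv_mul_cancel₀ hp0.ne', ENNReal.ofReal_one]
    have hne0 : ENNReal.ofReal r ≠ 0 := by
      simp [ENNReal.ofReal_eq_zero, not_le, hr0]
    have hlt : ENNReal.ofReal r * (p : ℝ≥0∞) < ENNReal.ofReal r * T :=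
      ENNReal.mul_right_strictMono hne0 ENNReal.ofReal_ne_top hp
    rw [hrp] at hlt
    exact absurd (lt_of_lt_of_le hlt h) (lt_irrefl 1)
end

section
/- A martingale calibrator f : [1,∞) → [0,∞) (an increasing function with ∫₀¹ f(1/x) dx ≤ 1) is admissible — meaning there is no increasing function g : [1,∞) → [0,∞) with ∫₀¹ g(1/x) dx ≤ 1, g(x) ≥ f(x) for all x ∈ [1,∞), and g(x) > f(x) for some x — if and only if f is right-continuous and ∫₀¹ f(1/x) dx = 1. -/
open MeasureTheory ENNReal Filter Topology

/-- A martingale calibrator `f : [1,∞) → [0,∞)` (an increasing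
function with `∫₀¹ f(1/x) dx ≤ 1`) is admissible — i.e. there is no increasing
`g : [1,∞) → [0,∞)` with `∫₀¹ g(1/x) dx ≤ 1`, `g ≥ f` on `[1,∞)` and `g(x) > f(x)`
for some `x` — if and only if `f` is right-continuous and `∫₀¹ f(1/x) dx = 1`. -/
theorem martingale_calibrator_admissible_iff
    (f : ℝ → ℝ)
    (hmono : MonotoneOn f (Set.Ici (1 : ℝ)))
    (hnonneg : ∀ x ∈ Set.Ici (1 : ℝ), 0 ≤ f x)
    (hint : ∫⁻ x in Set.Ioc (0 : ℝ) 1, ENNReal.ofReal (f x⁻¹) ≤ 1) :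
    (¬ ∃ g : ℝ → ℝ,
        MonotoneOn g (Set.Ici (1 : ℝ)) ∧
        (∀ x ∈ Set.Ici (1 : ℝ), 0 ≤ g x) ∧
        (∫⁻ x in Set.Ioc (0 : ℝ) 1, ENNReal.ofReal (g x⁻¹) ≤ 1) ∧
        (∀ x ∈ Set.Ici (1 : ℝ), f x ≤ g x) ∧
        (∃ x ∈ Set.Ici (1 : ℝ), f x < g x)) ↔
    ((∀ x ∈ Set.Ici (1 : ℝ), Tendsto f (nhdsWithin x (Set.Ioi x)) (𝓝 (f x))) ∧
      ∫⁻ x in Set.Ioc (0 : ℝ) 1, ENNReal.ofReal (f x⁻¹) = 1) := by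
  have hinv : ∀ x ∈ Set.Ioc (0 : ℝ) 1, x⁻¹ ∈ Set.Ici (1 : ℝ) := fun x hx =>
    Set.mem_Ici.2 ((one_le_inv₀ hx.1).2 hx.2)
  constructor
  · intro hadm
    constructor
    · -- right continuity
      intro x₀ hx₀
      by_contra hrc
      apply hadm
      have hsub : Set.Ioi x₀ ⊆ Set.Ici (1 : ℝ) := fun y hy => Set.mem_Ici.2 (le_of_lt (lt_of_le_of_lt (Set.mem_Ici.1 hx₀) (Set.mem_Ioi.1 hy)))
      have hmono' : MonotoneOn f (Set.Ioi x₀) := hmono.mono hsub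
      have hbdd : BddBelow (f '' Set.Ioi x₀) := by
        refine ⟨f x₀, ?_⟩
        rintro _ ⟨y, hy, rfl⟩
        exact hmono hx₀ (hsub hy) (le_of_lt hy)
      set L := sInf (f '' Set.Ioi x₀) with hL
      have htend : Tendsto f (𝓝[>] x₀) (𝓝 L) := hmono'.tendsto_nhdsGT hbdd
      have hfL : f x₀ ≤ L := by
        refine le_csInf ⟨f (x₀ + 1), ⟨x₀ + 1, by simp, rfl⟩⟩ ?_
        rintro _ ⟨y, hy, rfl⟩
        exact hmono hx₀ (hsub hy) (le_of_lt hy)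
      have hlt : f x₀ < L := lt_of_le_of_ne hfL (fun h => hrc (h ▸ htend))
      have hLle : ∀ y, x₀ < y → L ≤ f y := fun y hy => csInf_le hbdd ⟨y, hy, rfl⟩
      refine ⟨Function.update f x₀ L, ?_, ?_, ?_, ?_, x₀, hx₀, ?_⟩
      · -- monotone
        intro a ha b hb hab
        rcases eq_or_ne a x₀ with hax | hax <;> rcases eq_or_ne b x₀ with hbx | hbx
        · rw [hax, hbx]
        · rw [hax, Function.update_self, Function.update_of_ne hbx]
          exact hLle b (lt_of_le_of_ne (hax ▸ hab) (Ne.symm hbx))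
        · rw [hbx, Function.update_self, Function.update_of_ne hax]
          exact le_trans (hmono ha hx₀ (hbx ▸ hab)) hfL
        · rw [Function.update_of_ne hax, Function.update_of_ne hbx]
          exact hmono ha hb hab
      · intro x hx
        rcases eq_or_ne x x₀ with rfl | hx'
        · rw [Function.update_self]; exact le_trans (hnonneg _ hx₀) hfL
        · rw [Function.update_of_ne hx']; exact hnonneg x hx
      · -- integral: a.e. equal to f
        have hae : (fun x : ℝ => ENNReal.ofReal (Function.update f x₀ L x⁻¹)) =ᵐ[volume.restrict (Set.Ioc (0:ℝ) 1)] fun x => ENNReal.ofReal (f x⁻¹) := by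
          refine ae_restrict_of_ae (ae_iff.2 ?_)
          have : {x : ℝ | ¬ ENNReal.ofReal (Function.update f x₀ L x⁻¹) = ENNReal.ofReal (f x⁻¹)} ⊆ {x₀⁻¹} := by
            intro x hx
            by_contra hne
            apply hx
            have : x⁻¹ ≠ x₀ := by
              intro h
              apply hne
              simp only [Set.mem_singleton_iff]
              rw [← h, inv_inv]
            rw [Function.update_of_ne this]
          exact measure_mono_null this (measure_singleton _)
        rw [lintegral_congr_ae hae]
        exact hint
      · intro x hx
        rcases eq_or_ne x x₀ with rfl | hx'
        · rw [Function.update_self]; exact hfL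
        · rw [Function.update_of_ne hx']
      · rw [Function.update_self]; exact hlt
    · -- integral = 1
      by_contra hne
      have hlt : ∫⁻ x in Set.Ioc (0:ℝ) 1, ENNReal.ofReal (f x⁻¹) < 1 := lt_of_le_of_ne hint hne
      set I := ∫⁻ x in Set.Ioc (0:ℝ) 1, ENNReal.ofReal (f x⁻¹) with hI
      set c := (1 - I).toReal with hc
      have hIne : I ≠ ⊤ := ne_top_of_lt (lt_of_lt_of_le hlt le_top)
      have h1I : (1 : ℝ≥0∞) - I ≠ 0 := by
        simp only [ne_eq, tsub_eq_zero_iff_le, not_le]; exact hlt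
      have hcpos : 0 < c := ENNReal.toReal_pos h1I (by simp [ne_eq, ENNReal.sub_eq_top_iff])
      have hofc : ENNReal.ofReal c = 1 - I := ENNReal.ofReal_toReal (by simp [ne_eq, ENNReal.sub_eq_top_iff])
      apply hadm
      refine ⟨fun x => f x + c, ?_, ?_, ?_, ?_, 1, Set.self_mem_Ici, by show f 1 < f 1 + c; linarith⟩
      · intro a ha b hb hab; exact add_le_add_left (hmono ha hb hab) c
      · intro x hx; have := hnonneg x hx; show 0 ≤ f x + c; linarith
      · have heq : ∫⁻ x in Set.Ioc (0:ℝ) 1, ENNReal.ofReal (f x⁻¹ + c)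
            = ∫⁻ x in Set.Ioc (0:ℝ) 1, (ENNReal.ofReal (f x⁻¹) + ENNReal.ofReal c) := by
          refine lintegral_congr_ae ?_
          refine (ae_restrict_iff' measurableSet_Ioc).2 (ae_of_all _ fun x hx => ?_)
          exact ENNReal.ofReal_add (hnonneg _ (hinv x hx)) hcpos.le
        rw [heq, lintegral_add_right _ measurable_const, setLIntegral_const]
        simp only [Real.volume_Ioc, sub_zero, ENNReal.ofReal_one, mul_one, hofc, ← hI]
        rw [add_tsub_cancel_of_le hlt.le]
      · intro x hx; show f x ≤ f x + c; linarith
  · -- backwards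
    rintro ⟨hrc, heq⟩ ⟨g, hgmono, hgnn, hgint, hge, x₀, hx₀, hlt⟩
    set ε := (g x₀ - f x₀) / 2 with hε
    have hεpos : 0 < ε := by simp only [hε]; linarith
    have hev : ∀ᶠ y in 𝓝[>] x₀, f y < f x₀ + ε :=
      Filter.Tendsto.eventually_lt_const (by linarith) (hrc x₀ hx₀)
    obtain ⟨b, hb, hball⟩ := (nhdsGT_basis x₀).eventually_iff.1 hev
    -- on [x₀, b): g y ≥ f y + ε
    have key : ∀ y, x₀ ≤ y → y < b → f y + ε ≤ g y := by
      intro y hy hyb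
      have hy1 : (1:ℝ) ≤ y := le_trans hx₀ hy
      have hgy : g x₀ ≤ g y := hgmono hx₀ hy1 hy
      rcases eq_or_lt_of_le hy with rfl | hy'
      · simp only [hε]; linarith
      · have := hball ⟨hy', hyb⟩
        have : f y < f x₀ + ε := this
        have h2 : g x₀ = f x₀ + 2 * ε := by simp only [hε]; ring
        linarith
    set S := Set.Ioc b⁻¹ x₀⁻¹ with hS
    have hx₀pos : (0:ℝ) < x₀ := lt_of_lt_of_le one_pos hx₀
    have hbpos : (0:ℝ) < b := lt_trans hx₀pos hb
    have hSsub : S ⊆ Set.Ioc (0:ℝ) 1 := by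
      intro x hx
      constructor
      · exact lt_trans (inv_pos.2 hbpos) hx.1
      · exact le_trans hx.2 (inv_le_one_of_one_le₀ hx₀)
    have hSIco : ∀ x ∈ S, x₀ ≤ x⁻¹ ∧ x⁻¹ < b := by
      intro x hx
      have hxpos : 0 < x := lt_trans (inv_pos.2 hbpos) hx.1
      constructor
      · exact (le_inv_comm₀ hx₀pos hxpos).2 hx.2
      · exact (inv_lt_comm₀ hxpos hbpos).2 hx.1
    have hmain : ∫⁻ x in Set.Ioc (0:ℝ) 1,
        (ENNReal.ofReal (f x⁻¹) + S.indicator (fun _ => ENNReal.ofReal ε) x)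
        ≤ ∫⁻ x in Set.Ioc (0:ℝ) 1, ENNReal.ofReal (g x⁻¹) := by
      refine lintegral_mono_ae ((ae_restrict_iff' measurableSet_Ioc).2 (ae_of_all _ fun x hx => ?_))
      by_cases hxS : x ∈ S
      · rw [Set.indicator_of_mem hxS, ← ENNReal.ofReal_add (hnonneg _ (hinv x hx)) hεpos.le]
        obtain ⟨h1, h2⟩ := hSIco x hxS
        exact ENNReal.ofReal_le_ofReal (key _ h1 h2)
      · rw [Set.indicator_of_notMem hxS, add_zero]
        exact ENNReal.ofReal_le_ofReal (hge _ (hinv x hx))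
    rw [lintegral_add_right _ (measurable_const.indicator measurableSet_Ioc), heq] at hmain
    have hind : ∫⁻ x in Set.Ioc (0:ℝ) 1, S.indicator (fun _ => ENNReal.ofReal ε) x
        = ENNReal.ofReal ε * ENNReal.ofReal (x₀⁻¹ - b⁻¹) := by
      rw [lintegral_indicator_const measurableSet_Ioc, Measure.restrict_apply measurableSet_Ioc,
        Set.inter_eq_left.2 hSsub, Real.volume_Ioc]
    rw [hind] at hmain
    have hpos : ENNReal.ofReal ε * ENNReal.ofReal (x₀⁻¹ - b⁻¹) ≠ 0 := by
      apply mul_ne_zero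
      · exact (ENNReal.ofReal_pos.2 hεpos).ne'
      · have : b⁻¹ < x₀⁻¹ := inv_strictAnti₀ hx₀pos hb
        exact (ENNReal.ofReal_pos.2 (sub_pos.2 this)).ne'
    have : (1:ℝ≥0∞) < 1 + ENNReal.ofReal ε * ENNReal.ofReal (x₀⁻¹ - b⁻¹) :=
      ENNReal.lt_add_right one_ne_top hpos
    exact absurd (le_trans hmain hgint) (not_le.2 this)
end
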